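/- arXiv:2101.09304 — 8 statements merged into one kernel-verified Lean document; each statement's English description precedes it below -/
import Mathlib

section
/- Let Q and R be probability measures on (0,1)^K. Then the induced observed cell probabilities coincide, i.e. π_{Q,h}/(1-π_{Q,0}) = π_{R,h}/(1-π_{R,0}) for all h ∈ H*, if and only if there exists a real number A > 0 such that m_{Q,h} = A · m_{R,h} for all h ∈ H*. -/
open Finset MeasureTheory

section Stmt2Aux

variable {K : ℕ}

/-- Cell probability integrand. -/
noncomputable def Pf (h : Fin K → Bool) (q : Fin K → ℝ) : ℝ :=
  ∏ k, q k ^ (h k).toNat * (1 - q k) ^ (1 - (h k).toNat)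

/-- Moment integrand. -/
noncomputable def Mf (h : Fin K → Bool) (q : Fin K → ℝ) : ℝ :=
  ∏ k, q k ^ (h k).toNat

/-- The set of cells `h ≥ g`. -/
def Sset (g : Fin K → Bool) : Finset (Fin K → Bool) :=
  Fintype.piFinset fun k => Finset.univ.filter fun b => g k ≤ b

lemma mem_Sset {g h : Fin K → Bool} : h ∈ Sset g ↔ ∀ k, g k ≤ h k := by
  simp [Sset, Fintype.mem_piFinset]

lemma factorA (g : Bool) (x : ℝ) :
    x ^ g.toNat = ∑ b ∈ Finset.univ.filter (fun b => g ≤ b),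
      x ^ b.toNat * (1 - x) ^ (1 - b.toNat) := by
  cases g <;>
    simp [Finset.filter_insert, Finset.filter_singleton,
      (by decide : ¬(true ≤ false)), (by decide : (false ≤ true))] <;> ring

lemma factorB (g : Bool) (x : ℝ) :
    x ^ g.toNat * (1 - x) ^ (1 - g.toNat) = ∑ b ∈ Finset.univ.filter (fun b => g ≤ b),
      (-1 : ℝ) ^ (b.toNat - g.toNat) * x ^ b.toNat := by
  cases g <;>
    simp [Finset.filter_insert, Finset.filter_singleton,
      (by decide : ¬(true ≤ false)), (by decide : (false ≤ true))] <;> ring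

lemma pointA (g : Fin K → Bool) (q : Fin K → ℝ) :
    Mf g q = ∑ h ∈ Sset g, Pf h q := by
  calc Mf g q = ∏ k, ∑ b ∈ Finset.univ.filter (fun b => g k ≤ b),
        q k ^ b.toNat * (1 - q k) ^ (1 - b.toNat) :=
          Finset.prod_congr rfl fun k _ => factorA (g k) (q k)
    _ = ∑ h ∈ Sset g, Pf h q := Finset.prod_univ_sum _ _

lemma pointB (g : Fin K → Bool) (q : Fin K → ℝ) :
    Pf g q = ∑ h ∈ Sset g,
      (∏ k, (-1 : ℝ) ^ ((h k).toNat - (g k).toNat)) * Mf h q := by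
  calc Pf g q = ∏ k, ∑ b ∈ Finset.univ.filter (fun b => g k ≤ b),
        (-1 : ℝ) ^ (b.toNat - (g k).toNat) * q k ^ b.toNat :=
          Finset.prod_congr rfl fun k _ => factorB (g k) (q k)
    _ = ∑ h ∈ Sset g, ∏ k, (-1 : ℝ) ^ ((h k).toNat - (g k).toNat) * q k ^ (h k).toNat :=
          Finset.prod_univ_sum _ _
    _ = ∑ h ∈ Sset g, (∏ k, (-1 : ℝ) ^ ((h k).toNat - (g k).toNat)) * Mf h q := by
          refine Finset.sum_congr rfl fun h _ => ?_
          rw [Mf, Finset.prod_mul_distrib]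

lemma continuous_Pf (h : Fin K → Bool) : Continuous (Pf h) := by
  unfold Pf
  exact continuous_finset_prod _ fun k _ =>
    ((continuous_apply k).pow _).mul ((continuous_const.sub (continuous_apply k)).pow _)

lemma continuous_Mf (h : Fin K → Bool) : Continuous (Mf h) := by
  unfold Mf
  exact continuous_finset_prod _ fun k _ => (continuous_apply k).pow _

lemma Pf_pos {h : Fin K → Bool} {q : Fin K → ℝ} (hq : ∀ k, q k ∈ Set.Ioo (0 : ℝ) 1) :
    0 < Pf h q :=
  Finset.prod_pos fun k _ => mul_pos (pow_pos (hq k).1 _)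
    (pow_pos (by linarith [(hq k).2]) _)

lemma Pf_le_one {h : Fin K → Bool} {q : Fin K → ℝ} (hq : ∀ k, q k ∈ Set.Ioo (0 : ℝ) 1) :
    Pf h q ≤ 1 := by
  refine Finset.prod_le_one (fun k _ => ?_) (fun k _ => ?_)
  · exact le_of_lt (mul_pos (pow_pos (hq k).1 _) (pow_pos (by linarith [(hq k).2]) _))
  · have h1 : q k ^ (h k).toNat ≤ 1 := pow_le_one₀ (hq k).1.le (hq k).2.le
    have h2 : (1 - q k) ^ (1 - (h k).toNat) ≤ 1 :=
      pow_le_one₀ (by linarith [(hq k).2]) (by linarith [(hq k).1])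
    have h3 : (0 : ℝ) ≤ (1 - q k) ^ (1 - (h k).toNat) :=
      pow_nonneg (by linarith [(hq k).2]) _
    calc q k ^ (h k).toNat * (1 - q k) ^ (1 - (h k).toNat) ≤ 1 * 1 :=
          mul_le_mul h1 h2 h3 zero_le_one
      _ = 1 := one_mul 1

lemma Mf_pos {h : Fin K → Bool} {q : Fin K → ℝ} (hq : ∀ k, q k ∈ Set.Ioo (0 : ℝ) 1) :
    0 < Mf h q :=
  Finset.prod_pos fun k _ => pow_pos (hq k).1 _

lemma Mf_le_one {h : Fin K → Bool} {q : Fin K → ℝ} (hq : ∀ k, q k ∈ Set.Ioo (0 : ℝ) 1) :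
    Mf h q ≤ 1 :=
  Finset.prod_le_one (fun k _ => (pow_pos (hq k).1 _).le)
    (fun k _ => pow_le_one₀ (hq k).1.le (hq k).2.le)

variable (Q : Measure (Fin K → ℝ)) [IsProbabilityMeasure Q]
  (hQ : ∀ᵐ q ∂Q, ∀ k, q k ∈ Set.Ioo (0 : ℝ) 1)

include hQ

lemma integrable_Pf (h : Fin K → Bool) : Integrable (Pf h) Q := by
  refine Integrable.mono' (integrable_const 1) (continuous_Pf h).aestronglyMeasurable ?_
  filter_upwards [hQ] with q hq
  rw [Real.norm_eq_abs, abs_of_pos (Pf_pos hq)]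
  exact Pf_le_one hq

lemma integrable_Mf (h : Fin K → Bool) : Integrable (Mf h) Q := by
  refine Integrable.mono' (integrable_const 1) (continuous_Mf h).aestronglyMeasurable ?_
  filter_upwards [hQ] with q hq
  rw [Real.norm_eq_abs, abs_of_pos (Mf_pos hq)]
  exact Mf_le_one hq

lemma integral_Pf_pos (h : Fin K → Bool) : 0 < ∫ q, Pf h q ∂Q := by
  rw [integral_pos_iff_support_of_nonneg_ae
    (by filter_upwards [hQ] with q hq; exact (Pf_pos hq).le) (integrable_Pf Q hQ h)]
  have hsupp : ∀ᵐ q ∂Q, q ∈ Function.support (Pf h) := by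
    filter_upwards [hQ] with q hq
    exact (Pf_pos hq).ne'
  have h1 : Q (Function.support (Pf h))ᶜ = 0 := by
    have h2 := Filter.eventually_iff.mp hsupp
    rw [Set.setOf_mem_eq] at h2
    exact mem_ae_iff.mp h2
  by_contra hc
  push_neg at hc
  have h0 : Q (Function.support (Pf h)) = 0 := le_antisymm hc bot_le
  have := measure_univ_le_add_compl (μ := Q) (Function.support (Pf h))
  rw [h0, h1, measure_univ] at this
  simp at this

lemma moment_eq_sum (g : Fin K → Bool) :
    ∫ q, Mf g q ∂Q = ∑ h ∈ Sset g, ∫ q, Pf h q ∂Q := by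
  calc ∫ q, Mf g q ∂Q = ∫ q, ∑ h ∈ Sset g, Pf h q ∂Q :=
        integral_congr_ae (Filter.Eventually.of_forall fun q => pointA g q)
    _ = ∑ h ∈ Sset g, ∫ q, Pf h q ∂Q :=
        integral_finset_sum _ fun h _ => integrable_Pf Q hQ h

lemma cell_eq_sum (g : Fin K → Bool) :
    ∫ q, Pf g q ∂Q = ∑ h ∈ Sset g,
      (∏ k, (-1 : ℝ) ^ ((h k).toNat - (g k).toNat)) * ∫ q, Mf h q ∂Q := by
  calc ∫ q, Pf g q ∂Q
      = ∫ q, ∑ h ∈ Sset g, (∏ k, (-1 : ℝ) ^ ((h k).toNat - (g k).toNat)) * Mf h q ∂Q :=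
        integral_congr_ae (Filter.Eventually.of_forall fun q => pointB g q)
    _ = ∑ h ∈ Sset g, ∫ q, (∏ k, (-1 : ℝ) ^ ((h k).toNat - (g k).toNat)) * Mf h q ∂Q :=
        integral_finset_sum _ fun h _ => (integrable_Mf Q hQ h).const_mul _
    _ = ∑ h ∈ Sset g, (∏ k, (-1 : ℝ) ^ ((h k).toNat - (g k).toNat)) * ∫ q, Mf h q ∂Q := by
        exact Finset.sum_congr rfl fun h _ => integral_const_mul _ _

lemma sum_cells_eq_one : ∑ h : Fin K → Bool, ∫ q, Pf h q ∂Q = 1 := by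
  have hS : Sset (fun _ : Fin K => false) = Finset.univ := by
    ext h; simp [mem_Sset]
  have h1 := moment_eq_sum Q hQ (fun _ => false)
  rw [hS] at h1
  rw [← h1]
  have h2 : Mf (fun _ : Fin K => false) = fun _ => (1 : ℝ) := by
    funext q; simp [Mf]
  rw [h2]
  simp

end Stmt2Aux

/-- For probability measures `Q, R` on `(0,1)^K`, the induced observed cell
probabilities coincide, i.e. `π_{Q,h}/(1-π_{Q,0}) = π_{R,h}/(1-π_{R,0})` for all `h ∈ H*`,
iff there is a real `A > 0` with `m_{Q,h} = A · m_{R,h}` for all `h ∈ H*`. -/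
theorem stmt2 (K : ℕ) (hK : 1 ≤ K)
    (Q R : Measure (Fin K → ℝ)) [IsProbabilityMeasure Q] [IsProbabilityMeasure R]
    (hQ : ∀ᵐ q ∂Q, ∀ k, q k ∈ Set.Ioo (0 : ℝ) 1)
    (hR : ∀ᵐ q ∂ R, ∀ k, q k ∈ Set.Ioo (0 : ℝ) 1) :
    (∀ h : Fin K → Bool, h ≠ (fun _ => false) →
        (∫ q, ∏ k, q k ^ (h k).toNat * (1 - q k) ^ (1 - (h k).toNat) ∂Q) /
            (1 - ∫ q, ∏ k, (1 - q k) ∂Q) =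
          (∫ q, ∏ k, q k ^ (h k).toNat * (1 - q k) ^ (1 - (h k).toNat) ∂ R) /
            (1 - ∫ q, ∏ k, (1 - q k) ∂ R)) ↔
      ∃ A : ℝ, 0 < A ∧ ∀ h : Fin K → Bool, h ≠ (fun _ => false) →
        (∫ q, ∏ k, q k ^ (h k).toNat ∂Q) = A * ∫ q, ∏ k, q k ^ (h k).toNat ∂ R := by
  classical
  have e0 : ∀ (μ : Measure (Fin K → ℝ)),
      (∫ q, ∏ k, (1 - q k) ∂μ) = ∫ q, Pf (fun _ => false) q ∂μ := by
    intro μ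
    refine integral_congr_ae (Filter.Eventually.of_forall fun q => ?_)
    simp [Pf]
  rw [e0 Q, e0 R]
  show (∀ h : Fin K → Bool, h ≠ (fun _ => false) →
      (∫ q, Pf h q ∂Q) / (1 - ∫ q, Pf (fun _ => false) q ∂Q) =
        (∫ q, Pf h q ∂ R) / (1 - ∫ q, Pf (fun _ => false) q ∂ R)) ↔
    ∃ A : ℝ, 0 < A ∧ ∀ h : Fin K → Bool, h ≠ (fun _ => false) →
      (∫ q, Mf h q ∂Q) = A * ∫ q, Mf h q ∂ R
  have hone : (fun _ : Fin K => true) ≠ (fun _ : Fin K => false) := by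
    intro hcontra
    have := congr_fun hcontra ⟨0, hK⟩
    simp at this
  have hcsum : ∀ (μ : Measure (Fin K → ℝ)) [IsProbabilityMeasure μ],
      (∀ᵐ q ∂μ, ∀ k, q k ∈ Set.Ioo (0 : ℝ) 1) →
      1 - (∫ q, Pf (fun _ => false) q ∂μ) =
        ∑ h ∈ Finset.univ.erase (fun _ : Fin K => false), ∫ q, Pf h q ∂μ := by
    intro μ _ hμ
    have h1 := sum_cells_eq_one μ hμ
    have h2 : (∫ q, Pf (fun _ : Fin K => false) q ∂μ) +
        ∑ h ∈ Finset.univ.erase (fun _ : Fin K => false), ∫ q, Pf h q ∂μ =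
        ∑ h : Fin K → Bool, ∫ q, Pf h q ∂μ :=
      Finset.add_sum_erase Finset.univ (fun h => ∫ q, Pf h q ∂μ) (Finset.mem_univ _)
    linarith
  have hcQ := hcsum Q hQ
  have hcR := hcsum R hR
  have hcQpos : 0 < 1 - ∫ q, Pf (fun _ : Fin K => false) q ∂Q := by
    rw [hcQ]
    exact Finset.sum_pos' (fun h _ => (integral_Pf_pos Q hQ h).le)
      ⟨fun _ => true, Finset.mem_erase.mpr ⟨hone, Finset.mem_univ _⟩, integral_Pf_pos Q hQ _⟩
  have hcRpos : 0 < 1 - ∫ q, Pf (fun _ : Fin K => false) q ∂ R := by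
    rw [hcR]
    exact Finset.sum_pos' (fun h _ => (integral_Pf_pos R hR h).le)
      ⟨fun _ => true, Finset.mem_erase.mpr ⟨hone, Finset.mem_univ _⟩, integral_Pf_pos R hR _⟩
  have hSne : ∀ g : Fin K → Bool, g ≠ (fun _ => false) →
      ∀ h ∈ Sset g, h ≠ (fun _ : Fin K => false) := by
    intro g hg h hmem hcontra
    have hex : ∃ k, g k = true := by
      by_contra hcon
      push_neg at hcon
      exact hg (funext fun k => by simpa using hcon k)
    obtain ⟨k, hk⟩ := hex
    have := (mem_Sset.mp hmem) k
    rw [hk, hcontra] at this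
    have h5 : (true : Bool) ≤ false := by simpa using this
    exact absurd h5 (by decide)
  constructor
  · -- forward
    intro hyp
    refine ⟨(1 - ∫ q, Pf (fun _ : Fin K => false) q ∂Q) /
        (1 - ∫ q, Pf (fun _ : Fin K => false) q ∂ R), div_pos hcQpos hcRpos, ?_⟩
    have hcell : ∀ h : Fin K → Bool, h ≠ (fun _ => false) →
        (∫ q, Pf h q ∂Q) = (1 - ∫ q, Pf (fun _ : Fin K => false) q ∂Q) /
          (1 - ∫ q, Pf (fun _ : Fin K => false) q ∂ R) * ∫ q, Pf h q ∂ R := by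
      intro h hh
      have h3 := hyp h hh
      field_simp at h3 ⊢
      linarith
    intro g hg
    rw [moment_eq_sum Q hQ g, moment_eq_sum R hR g, Finset.mul_sum]
    exact Finset.sum_congr rfl fun h hmem => hcell h (hSne g hg h hmem)
  · -- backward
    rintro ⟨A, hA, hAm⟩ h hh
    have hcell : ∀ g : Fin K → Bool, g ≠ (fun _ => false) →
        (∫ q, Pf g q ∂Q) = A * ∫ q, Pf g q ∂ R := by
      intro g hg
      rw [cell_eq_sum Q hQ g, cell_eq_sum R hR g, Finset.mul_sum]
      refine Finset.sum_congr rfl fun h hmem => ?_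
      rw [hAm h (hSne g hg h hmem)]
      ring
    have hc : 1 - (∫ q, Pf (fun _ : Fin K => false) q ∂Q) =
        A * (1 - ∫ q, Pf (fun _ : Fin K => false) q ∂ R) := by
      rw [hcQ, hcR, Finset.mul_sum]
      exact Finset.sum_congr rfl fun g hmem => hcell g (Finset.mem_erase.mp hmem).1
    rw [hcell h hh, hc, mul_div_mul_left _ _ (ne_of_gt hA)]
end

section
/- Suppose 2J ≤ K. Let (ν, q) and (ν', q') be two J-class latent class model parameter sets: ν_j, ν'_j ≥ 0 with ∑_{j=1}^J ν_j = ∑_{j=1}^J ν'_j = 1, q_{jk}, q'_{jk} ∈ (0,1), and for each fixed k the values q_{1k},...,q_{Jk} are pairwise distinct and the values q'_{1k},...,q'_{Jk} are pairwise distinct. Define the induced cell probabilities π_h = ∑_{j=1}^J ν_j ∏_{k=1}^K q_{jk}^{h_k}(1-q_{jk})^{1-h_k} and π'_h analogously, for h ∈ H. If π_h/(1-π_0) = π'_h/(1-π'_0) for all h ∈ H*, then π_0 = π'_0. -/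
open Finset

/-- If `2J ≤ K`, then the `J`-class latent class model is conditionally
identifiable: for two parameter sets `(ν, q)` and `(ν', q')` (class probabilities
nonnegative summing to one, sampling probabilities in `(0,1)`, pairwise distinct across
classes for each list), if the induced observed cell probabilities coincide on `H*`,
then the induced unobserved cell probabilities `π_0` coincide. -/
theorem stmt3 (K J : ℕ) (hK : 2 ≤ K) (hJ : 1 ≤ J) (hJK : 2 * J ≤ K)
    (ν ν' : Fin J → ℝ) (q q' : Fin J → Fin K → ℝ)
    (hν : ∀ j, 0 ≤ ν j) (hν' : ∀ j, 0 ≤ ν' j)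
    (hνs : ∑ j, ν j = 1) (hν's : ∑ j, ν' j = 1)
    (hq : ∀ j k, q j k ∈ Set.Ioo (0 : ℝ) 1) (hq' : ∀ j k, q' j k ∈ Set.Ioo (0 : ℝ) 1)
    (hd : ∀ k, ∀ j j' : Fin J, j ≠ j' → q j k ≠ q j' k)
    (hd' : ∀ k, ∀ j j' : Fin J, j ≠ j' → q' j k ≠ q' j' k)
    (hobs : ∀ h : Fin K → Bool, h ≠ (fun _ => false) →
        (∑ j, ν j * ∏ k, q j k ^ (h k).toNat * (1 - q j k) ^ (1 - (h k).toNat)) /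
            (1 - ∑ j, ν j * ∏ k, (1 - q j k)) =
          (∑ j, ν' j * ∏ k, q' j k ^ (h k).toNat * (1 - q' j k) ^ (1 - (h k).toNat)) /
            (1 - ∑ j, ν' j * ∏ k, (1 - q' j k))) :
    (∑ j, ν j * ∏ k, (1 - q j k)) = ∑ j, ν' j * ∏ k, (1 - q' j k) := by
  have hKpos : 0 < K := by omega
  set π0 := ∑ j, ν j * ∏ k, (1 - q j k) with hπ0def
  set π0' := ∑ j, ν' j * ∏ k, (1 - q' j k) with hπ0'def
  -- π0 < 1 and π0' < 1
  have hlt : ∀ (μ : Fin J → ℝ) (p : Fin J → Fin K → ℝ), (∀ j, 0 ≤ μ j) →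
      (∑ j, μ j = 1) → (∀ j k, p j k ∈ Set.Ioo (0:ℝ) 1) →
      (∑ j, μ j * ∏ k, (1 - p j k)) < 1 := by
    intro μ p hμ hμs hp
    obtain ⟨j0, hj0⟩ : ∃ j, 0 < μ j := by
      by_contra hcon
      push_neg at hcon
      have : ∑ j, μ j ≤ 0 := Finset.sum_nonpos fun j _ => hcon j
      linarith
    set k0 : Fin K := ⟨0, hKpos⟩
    have hprodnn : ∀ j, 0 ≤ ∏ k, (1 - p j k) :=
      fun j => Finset.prod_nonneg fun k _ => by linarith [(hp j k).2]
    have hprod1 : ∀ j, ∏ k, (1 - p j k) < 1 := by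
      intro j
      have hrest : ∏ k ∈ (univ : Finset (Fin K)).erase k0, (1 - p j k) ≤ 1 :=
        Finset.prod_le_one (fun k _ => by linarith [(hp j k).2]) (fun k _ => by linarith [(hp j k).1])
      have hrestnn : 0 ≤ ∏ k ∈ (univ : Finset (Fin K)).erase k0, (1 - p j k) :=
        Finset.prod_nonneg fun k _ => by linarith [(hp j k).2]
      calc ∏ k, (1 - p j k)
          = (1 - p j k0) * ∏ k ∈ (univ : Finset (Fin K)).erase k0, (1 - p j k) :=
            (Finset.mul_prod_erase univ _ (mem_univ k0)).symm
        _ ≤ (1 - p j k0) * 1 := by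
            have := (hp j k0).2
            nlinarith
        _ < 1 := by have := (hp j k0).1; linarith
    have : ∑ j, μ j * ∏ k, (1 - p j k) < ∑ j, μ j := by
      refine Finset.sum_lt_sum (fun j _ => ?_) ⟨j0, mem_univ _, ?_⟩
      · nlinarith [hμ j, hprod1 j, hprodnn j]
      · nlinarith [hprod1 j0, hprodnn j0]
    linarith [this, hμs.le, hμs.ge]
  have hb : (0:ℝ) < 1 - π0 := by
    have := hlt ν q hν hνs hq
    rw [← hπ0def] at this
    linarith
  have ha : (0:ℝ) < 1 - π0' := by
    have := hlt ν' q' hν' hν's hq'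
    rw [← hπ0'def] at this
    linarith
  -- cleared-denominator hypothesis
  have key : ∀ h : Fin K → Bool, h ≠ (fun _ => false) →
      (1 - π0') * (∑ j, ν j * ∏ k, q j k ^ (h k).toNat * (1 - q j k) ^ (1 - (h k).toNat)) =
      (1 - π0) * (∑ j, ν' j * ∏ k, q' j k ^ (h k).toNat * (1 - q' j k) ^ (1 - (h k).toNat)) := by
    intro h hne
    have h1 := hobs h hne
    rw [div_eq_div_iff (by linarith) (by linarith)] at h1
    linarith
  -- the special evaluation point T
  set T : Fin K → ℝ := fun m =>
    if h : (m : ℕ) < J then 1 - 1 / (q ⟨(m : ℕ), h⟩ m)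
    else if h2 : (m : ℕ) < 2 * J then 1 - 1 / (q' ⟨(m : ℕ) - J, by omega⟩ m) else 1
    with hTdef
  have he1 : ∀ j : Fin J, (j : ℕ) < K := fun j => by omega
  have he2 : ∀ j : Fin J, J + (j : ℕ) < K := fun j => by omega
  set e1 : Fin J → Fin K := fun j => ⟨(j : ℕ), he1 j⟩ with he1def
  set e2 : Fin J → Fin K := fun j => ⟨J + (j : ℕ), he2 j⟩ with he2def
  have hzero1 : ∀ j : Fin J, q j (e1 j) * T (e1 j) + (1 - q j (e1 j)) = 0 := by
    intro j
    have hT1 : T (e1 j) = 1 - 1 / (q j (e1 j)) := by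
      rw [hTdef]
      simp only [he1def]
      rw [dif_pos (show ((⟨(j : ℕ), he1 j⟩ : Fin K) : ℕ) < J from j.isLt)]
    rw [hT1]
    have h0 : q j (e1 j) ≠ 0 := ne_of_gt (hq j (e1 j)).1
    field_simp
    ring
  have hzero2 : ∀ j : Fin J, q' j (e2 j) * T (e2 j) + (1 - q' j (e2 j)) = 0 := by
    intro j
    have hT2 : T (e2 j) = 1 - 1 / (q' j (e2 j)) := by
      rw [hTdef]
      simp only [he2def]
      rw [dif_neg (by omega), dif_pos (by omega : J + (j : ℕ) < 2 * J)]
      congr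
      omega
    rw [hT2]
    have h0 : q' j (e2 j) ≠ 0 := ne_of_gt (hq' j (e2 j)).1
    field_simp
    ring
  -- expansion over subsets
  have expand : ∀ (p : Fin J → Fin K → ℝ) (c : Fin J → ℝ),
      ∑ j, c j * ∏ k, (p j k * T k + (1 - p j k)) =
        ∑ S ∈ (univ : Finset (Fin K)).powerset,
          (∏ k ∈ S, T k) *
            ∑ j, c j * ((∏ k ∈ S, p j k) * ∏ k ∈ univ \ S, (1 - p j k)) := by
    intro p c
    have hp : ∀ j, ∏ k, (p j k * T k + (1 - p j k)) =
        ∑ S ∈ (univ : Finset (Fin K)).powerset,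
          (∏ k ∈ S, p j k * T k) * ∏ k ∈ univ \ S, (1 - p j k) :=
      fun j => Finset.prod_add _ _ _
    simp_rw [hp, Finset.mul_sum]
    rw [Finset.sum_comm]
    refine Finset.sum_congr rfl fun S _ => ?_
    refine Finset.sum_congr rfl fun j _ => ?_
    rw [Finset.prod_mul_distrib]
    ring
  -- conversion between Bool-vector cells and subset products
  have conv : ∀ (p : Fin J → Fin K → ℝ) (j : Fin J) (S : Finset (Fin K)),
      (∏ k, p j k ^ ((decide (k ∈ S)).toNat) * (1 - p j k) ^ (1 - (decide (k ∈ S)).toNat)) =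
        (∏ k ∈ S, p j k) * ∏ k ∈ univ \ S, (1 - p j k) := by
    intro p j S
    rw [← Finset.prod_sdiff (Finset.subset_univ S), mul_comm]
    congr 1
    · exact Finset.prod_congr rfl fun k hk => by simp [hk]
    · refine Finset.prod_congr rfl fun k hk => ?_
      have hk' : k ∉ S := (Finset.mem_sdiff.mp hk).2
      simp [hk']
  -- the per-subset identity for nonempty subsets
  have keyS : ∀ S : Finset (Fin K), S ≠ ∅ →
      ∑ j, ((1 - π0') * ν j) * ((∏ k ∈ S, q j k) * ∏ k ∈ univ \ S, (1 - q j k)) =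
      ∑ j, ((1 - π0) * ν' j) * ((∏ k ∈ S, q' j k) * ∏ k ∈ univ \ S, (1 - q' j k)) := by
    intro S hS
    obtain ⟨k0, hk0⟩ := Finset.nonempty_iff_ne_empty.mpr hS
    have hne : (fun k => decide (k ∈ S)) ≠ (fun _ => false) := by
      intro hcon
      have := congrFun hcon k0
      simp [hk0] at this
    have hkey := key _ hne
    simp only [conv] at hkey
    simp_rw [mul_assoc]
    rw [← Finset.mul_sum, ← Finset.mul_sum]
    exact hkey
  -- each product vanishes at T
  have E1 : ∑ j, ((1 - π0') * ν j) * ∏ k, (q j k * T k + (1 - q j k)) = 0 :=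
    Finset.sum_eq_zero fun j _ => by
      rw [Finset.prod_eq_zero (Finset.mem_univ (e1 j)) (hzero1 j), mul_zero]
  have E2 : ∑ j, ((1 - π0) * ν' j) * ∏ k, (q' j k * T k + (1 - q' j k)) = 0 :=
    Finset.sum_eq_zero fun j _ => by
      rw [Finset.prod_eq_zero (Finset.mem_univ (e2 j)) (hzero2 j), mul_zero]
  have main1 := expand q (fun j => (1 - π0') * ν j)
  have main2 := expand q' (fun j => (1 - π0) * ν' j)
  have hsum : ∑ S ∈ (univ : Finset (Fin K)).powerset,
      ((∏ k ∈ S, T k) * ∑ j, ((1 - π0') * ν j) * ((∏ k ∈ S, q j k) * ∏ k ∈ univ \ S, (1 - q j k)) -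
       (∏ k ∈ S, T k) * ∑ j, ((1 - π0) * ν' j) * ((∏ k ∈ S, q' j k) * ∏ k ∈ univ \ S, (1 - q' j k)))
      = 0 := by
    rw [Finset.sum_sub_distrib, ← main1, ← main2, E1, E2, sub_zero]
  have hsingle : ∑ S ∈ (univ : Finset (Fin K)).powerset,
      ((∏ k ∈ S, T k) * ∑ j, ((1 - π0') * ν j) * ((∏ k ∈ S, q j k) * ∏ k ∈ univ \ S, (1 - q j k)) -
       (∏ k ∈ S, T k) * ∑ j, ((1 - π0) * ν' j) * ((∏ k ∈ S, q' j k) * ∏ k ∈ univ \ S, (1 - q' j k)))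
      = (1 - π0') * π0 - (1 - π0) * π0' := by
    rw [Finset.sum_eq_single (∅ : Finset (Fin K))]
    · simp only [Finset.prod_empty, one_mul, Finset.sdiff_empty]
      rw [hπ0def, hπ0'def, Finset.mul_sum, Finset.mul_sum]
      simp_rw [mul_assoc]
    · intro S _ hSne
      rw [keyS S hSne, sub_self]
    · intro hcon
      exact absurd (Finset.empty_mem_powerset _) hcon
  have hfinal : (1 - π0') * π0 = (1 - π0) * π0' := by
    rw [hsum] at hsingle
    linarith
  linear_combination hfinal
end

section
/- Suppose 2J > K. Then there exist two J-class latent class model parameter sets (ν, q) and (ν', q'), each with class membership probabilities nonnegative and summing to 1, sampling probabilities in (0,1), and with the values q_{1k},...,q_{Jk} pairwise distinct for each k (likewise for q'), such that the induced observed cell probabilities coincide, π_h/(1-π_0) = π'_h/(1-π'_0) for all h ∈ H*, but π_0 ≠ π'_0. -/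
open Finset

open Polynomial

lemma lag_basis_coeff {n : ℕ} {t : ℕ → ℝ} (ht : Set.InjOn t (Finset.range n))
    {i : ℕ} (hi : i ∈ Finset.range n) :
    (Lagrange.basis (Finset.range n) t i).coeff (n - 1)
      = (∏ j ∈ (Finset.range n).erase i, (t i - t j))⁻¹ := by
  have hmono : ((Finset.range n).erase i).prod (fun j => X - C (t j)) |>.Monic :=
    monic_prod_of_monic _ _ (fun j _ => monic_X_sub_C _)
  have hdeg : (((Finset.range n).erase i).prod (fun j => X - C (t j))).natDegree = n - 1 := by
    rw [natDegree_prod_of_monic _ _ (fun j _ => monic_X_sub_C _)]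
    simp [Finset.card_erase_of_mem hi]
  have hb : Lagrange.basis (Finset.range n) t i
      = C (∏ j ∈ (Finset.range n).erase i, (t i - t j)⁻¹)
        * ((Finset.range n).erase i).prod (fun j => X - C (t j)) := by
    unfold Lagrange.basis Lagrange.basisDivisor
    rw [Finset.prod_mul_distrib, map_prod]
  rw [hb, coeff_C_mul, ← hdeg, hmono.coeff_natDegree, mul_one, Finset.prod_inv_distrib]

lemma lag_sum_coeff {n : ℕ} {t : ℕ → ℝ} (ht : Set.InjOn t (Finset.range n))
    (f : ℝ[X]) (hf : f.degree < (n : ℕ)) :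
    ∑ i ∈ Finset.range n, (∏ j ∈ (Finset.range n).erase i, (t i - t j))⁻¹ * f.eval (t i)
      = f.coeff (n - 1) := by
  have h := Lagrange.eq_interpolate ht (by simpa using hf)
  have h2 := congrArg (fun p => Polynomial.coeff p (n - 1)) h
  simp only [Lagrange.interpolate_apply, Polynomial.finset_sum_coeff,
    Polynomial.coeff_C_mul] at h2
  rw [h2]
  refine Finset.sum_congr rfl fun i hi => ?_
  rw [lag_basis_coeff ht hi, mul_comm]

lemma master_sum {n : ℕ} (hn : 2 ≤ n) {t : ℕ → ℝ} (ht : Set.InjOn t (Finset.range n))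
    (ht0 : ∀ i, i ∈ Finset.range n → t i ≠ 0)
    (f : ℝ[X]) (hf : f.degree < (n : ℕ)) :
    ∑ i ∈ Finset.range n, (t i)⁻¹ * (∏ j ∈ (Finset.range n).erase i, (t i - t j))⁻¹ * f.eval (t i)
      = f.eval 0 * ∑ i ∈ Finset.range n,
          (t i)⁻¹ * (∏ j ∈ (Finset.range n).erase i, (t i - t j))⁻¹ := by
  set g : ℝ[X] := f /ₘ X with hg
  have hfg : f = X * g + C (f.eval 0) := by
    conv_lhs => rw [← Polynomial.modByMonic_add_div f X]
    rw [Polynomial.modByMonic_X]; ring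
  have hgdeg : g.natDegree < n - 1 := by
    have h1 : f.natDegree ≤ n - 1 := by
      by_cases h0 : f = 0
      · simp [h0]
      · have := (Polynomial.natDegree_lt_iff_degree_lt h0).mpr hf
        omega
    have h2 : g.natDegree = f.natDegree - 1 := by
      rw [hg, Polynomial.natDegree_divByMonic f monic_X, natDegree_X]
    omega
  have hgcoeff : g.coeff (n - 1) = 0 :=
    Polynomial.coeff_eq_zero_of_natDegree_lt hgdeg
  have key : ∑ i ∈ Finset.range n,
      (∏ j ∈ (Finset.range n).erase i, (t i - t j))⁻¹ * g.eval (t i) = 0 := by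
    rw [lag_sum_coeff ht g ?_, hgcoeff]
    · calc g.degree ≤ g.natDegree := Polynomial.degree_le_natDegree
        _ < (n : WithBot ℕ) := by exact_mod_cast Nat.lt_of_lt_of_le hgdeg (by omega)
  calc ∑ i ∈ Finset.range n,
        (t i)⁻¹ * (∏ j ∈ (Finset.range n).erase i, (t i - t j))⁻¹ * f.eval (t i)
      = ∑ i ∈ Finset.range n,
        ((∏ j ∈ (Finset.range n).erase i, (t i - t j))⁻¹ * g.eval (t i)
          + f.eval 0 * ((t i)⁻¹ * (∏ j ∈ (Finset.range n).erase i, (t i - t j))⁻¹)) := by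
        refine Finset.sum_congr rfl fun i hi => ?_
        have hti := ht0 i hi
        rw [hfg]
        simp only [Polynomial.eval_add, Polynomial.eval_mul, Polynomial.eval_X,
          Polynomial.eval_C]
        rcases eq_or_ne (∏ j ∈ (Finset.range n).erase i, (t i - t j)) 0 with hP | hP
        · simp [hP]
        · field_simp
          ring
    _ = f.eval 0 * ∑ i ∈ Finset.range n,
          (t i)⁻¹ * (∏ j ∈ (Finset.range n).erase i, (t i - t j))⁻¹ := by
        rw [Finset.sum_add_distrib, key, zero_add, Finset.mul_sum]

set_option maxHeartbeats 3000000 in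
/-- If `2J > K`, then the `J`-class latent class model is not conditionally
identifiable: there exist two parameter sets `(ν, q)` and `(ν', q')` (class probabilities
nonnegative summing to one, sampling probabilities in `(0,1)`, pairwise distinct across
classes for each list) whose induced observed cell probabilities coincide on `H*` but
whose unobserved cell probabilities `π_0` differ. -/
theorem stmt4 (K J : ℕ) (hK : 2 ≤ K) (hJ : 1 ≤ J) (hJK : K < 2 * J) :
    ∃ (ν ν' : Fin J → ℝ) (q q' : Fin J → Fin K → ℝ),
      (∀ j, 0 ≤ ν j) ∧ (∀ j, 0 ≤ ν' j) ∧
      (∑ j, ν j = 1) ∧ (∑ j, ν' j = 1) ∧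
      (∀ j k, q j k ∈ Set.Ioo (0 : ℝ) 1) ∧ (∀ j k, q' j k ∈ Set.Ioo (0 : ℝ) 1) ∧
      (∀ k, ∀ j j' : Fin J, j ≠ j' → q j k ≠ q j' k) ∧
      (∀ k, ∀ j j' : Fin J, j ≠ j' → q' j k ≠ q' j' k) ∧
      (∀ h : Fin K → Bool, h ≠ (fun _ => false) →
        (∑ j, ν j * ∏ k, q j k ^ (h k).toNat * (1 - q j k) ^ (1 - (h k).toNat)) /
            (1 - ∑ j, ν j * ∏ k, (1 - q j k)) =
          (∑ j, ν' j * ∏ k, q' j k ^ (h k).toNat * (1 - q' j k) ^ (1 - (h k).toNat)) /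
            (1 - ∑ j, ν' j * ∏ k, (1 - q' j k))) ∧
      (∑ j, ν j * ∏ k, (1 - q j k)) ≠ (∑ j, ν' j * ∏ k, (1 - q' j k)) := by
  classical
  set n : ℕ := K + 1 with hn_def
  have hn2 : 2 ≤ n := by omega
  have hKn : K < n := by omega
  have hn2J : n ≤ 2 * J := by omega
  -- the nodes
  set t : ℕ → ℝ := fun i => ((n : ℝ) + 2 + i) / (2 * n + 2) with ht_def
  have hden : (0:ℝ) < 2 * (n:ℝ) + 2 := by positivity
  have ht_half : ∀ i : ℕ, (1:ℝ)/2 < t i := by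
    intro i
    rw [ht_def]
    rw [div_lt_div_iff₀ (by norm_num) hden]
    have : (0:ℝ) ≤ i := Nat.cast_nonneg i
    nlinarith
  have ht_pos : ∀ i : ℕ, 0 < t i := fun i => lt_trans (by norm_num) (ht_half i)
  have ht_ne : ∀ i : ℕ, t i ≠ 0 := fun i => (ht_pos i).ne'
  have ht_ne' : ∀ i, i ∈ Finset.range n → t i ≠ 0 := fun i _ => ht_ne i
  have ht_lt1 : ∀ i : ℕ, i < n → t i < 1 := by
    intro i hi
    rw [ht_def, div_lt_one hden]
    have : (i:ℝ) < n := by exact_mod_cast hi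
    nlinarith
  have ht_mono : StrictMono t := by
    intro i j hij
    have hij' : ((i:ℝ)) < j := by exact_mod_cast hij
    rw [ht_def]
    apply div_lt_div_of_pos_right (by linarith) hden
  have ht_inj : Function.Injective t := ht_mono.injective
  have ht_injOn : Set.InjOn t (Finset.range n) := fun a _ b _ hab => ht_inj hab
  have ht_sublt : ∀ i j : ℕ, j < i → 0 < t i - t j := fun i j hij =>
    sub_pos.mpr (ht_mono hij)
  -- the weights
  set P : ℕ → ℝ := fun i => ∏ j ∈ (Finset.range n).erase i, (t i - t j) with hP_def
  set w : ℕ → ℝ := fun i => (t i)⁻¹ * (P i)⁻¹ with hw_def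
  have hP_ne : ∀ i, i ∈ Finset.range n → P i ≠ 0 := by
    intro i hi
    simp only [hP_def]
    refine Finset.prod_ne_zero_iff.mpr fun j hj => ?_
    have : j ≠ i := (Finset.mem_erase.mp hj).1
    exact sub_ne_zero.mpr fun he => this (ht_inj he.symm)
  have hw_ne : ∀ i, i ∈ Finset.range n → w i ≠ 0 := by
    intro i hi
    simp only [hw_def]
    exact mul_ne_zero (inv_ne_zero (ht_ne i)) (inv_ne_zero (hP_ne i hi))
  -- sign of the weights
  have hPpos : ∀ i, i ∈ Finset.range n → 0 < (-1:ℝ)^(n - 1 - i) * P i := by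
    intro i hi
    rw [Finset.mem_range] at hi
    have hsplitP : P i = (∏ j ∈ Finset.range i, (t i - t j))
        * ∏ j ∈ Finset.Ico (i+1) n, (t i - t j) := by
      simp only [hP_def]
      rw [← Finset.prod_filter_mul_prod_filter_not ((Finset.range n).erase i) (fun j => j < i)]
      congr 1
      · apply Finset.prod_congr _ (fun _ _ => rfl)
        ext j
        simp only [Finset.mem_filter, Finset.mem_erase, Finset.mem_range]
        omega
      · apply Finset.prod_congr _ (fun _ _ => rfl)
        ext j
        simp only [Finset.mem_filter, Finset.mem_erase, Finset.mem_range, Finset.mem_Ico]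
        omega
    have hneg : (∏ j ∈ Finset.Ico (i+1) n, (t i - t j))
        = (-1:ℝ)^(n - 1 - i) * ∏ j ∈ Finset.Ico (i+1) n, (t j - t i) := by
      have hcard : n - 1 - i = (Finset.Ico (i+1) n).card := by
        rw [Nat.card_Ico]; omega
      rw [hcard, ← Finset.prod_const, ← Finset.prod_mul_distrib]
      exact Finset.prod_congr rfl fun j _ => by ring
    have h1 : 0 < ∏ j ∈ Finset.range i, (t i - t j) :=
      Finset.prod_pos fun j hj => ht_sublt i j (Finset.mem_range.mp hj)
    have h2 : 0 < ∏ j ∈ Finset.Ico (i+1) n, (t j - t i) :=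
      Finset.prod_pos fun j hj => ht_sublt j i (by
        have := Finset.mem_Ico.mp hj; omega)
    have hsq : (-1:ℝ)^(n - 1 - i) * (-1:ℝ)^(n - 1 - i) = 1 := by
      rw [← pow_add]
      exact Even.neg_one_pow ⟨n - 1 - i, rfl⟩
    have : (-1:ℝ)^(n - 1 - i) * ((∏ j ∈ Finset.range i, (t i - t j))
        * ((-1:ℝ)^(n - 1 - i) * ∏ j ∈ Finset.Ico (i+1) n, (t j - t i)))
        = ((-1:ℝ)^(n - 1 - i) * (-1:ℝ)^(n - 1 - i))
          * ((∏ j ∈ Finset.range i, (t i - t j)) * ∏ j ∈ Finset.Ico (i+1) n, (t j - t i)) := by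
      ring
    rw [hsplitP, hneg, this, hsq, one_mul]
    exact mul_pos h1 h2
  have hw_pos : ∀ i, i ∈ Finset.range n → Even (n - 1 - i) → 0 < w i := by
    intro i hi he
    have h := hPpos i hi
    rw [he.neg_one_pow, one_mul] at h
    simp only [hw_def]
    exact mul_pos (inv_pos.mpr (ht_pos i)) (inv_pos.mpr h)
  have hw_neg : ∀ i, i ∈ Finset.range n → ¬ Even (n - 1 - i) → w i < 0 := by
    intro i hi he
    have h := hPpos i hi
    rw [(Nat.not_even_iff_odd.mp he).neg_one_pow] at h
    have hPneg : P i < 0 := by nlinarith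
    simp only [hw_def]
    exact mul_neg_of_pos_of_neg (inv_pos.mpr (ht_pos i)) (inv_lt_zero.mpr hPneg)
  -- the two halves
  set a : ℕ := (n + 1) / 2 with ha_def
  set b : ℕ := n / 2 with hb_def
  have ha1 : 1 ≤ a := by omega
  have hb1 : 1 ≤ b := by omega
  have haJ : a ≤ J := by omega
  have hbJ : b ≤ J := by omega
  have hwA : ∀ m, m < a → 0 < w (n - 1 - 2*m) := by
    intro m hm
    refine hw_pos _ (Finset.mem_range.mpr (by omega)) ⟨m, by omega⟩
  have hwB : ∀ m, m < b → w (n - 2 - 2*m) < 0 := by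
    intro m hm
    refine hw_neg _ (Finset.mem_range.mpr (by omega)) ?_
    rintro ⟨r, hr⟩
    omega
  -- splitting a sum over range n by parity
  have hsplit : ∀ G : ℕ → ℝ, ∑ i ∈ Finset.range n, G i
      = ∑ m ∈ Finset.range a, G (n - 1 - 2*m) + ∑ m ∈ Finset.range b, G (n - 2 - 2*m) := by
    intro G
    have hU : ((Finset.range a).image (fun m => n - 1 - 2*m))
        ∪ ((Finset.range b).image (fun m => n - 2 - 2*m)) = Finset.range n := by
      ext i
      simp only [Finset.mem_union, Finset.mem_image, Finset.mem_range]
      constructor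
      · rintro (⟨m, hm, rfl⟩ | ⟨m, hm, rfl⟩) <;> omega
      · intro hi
        rcases Nat.even_or_odd (n - 1 - i) with ⟨m, hm⟩ | ⟨m, hm⟩
        · exact Or.inl ⟨m, by omega, by omega⟩
        · exact Or.inr ⟨m, by omega, by omega⟩
    have hdisj : Disjoint ((Finset.range a).image (fun m => n - 1 - 2*m))
        ((Finset.range b).image (fun m => n - 2 - 2*m)) := by
      rw [Finset.disjoint_left]
      intro i hi hi'
      simp only [Finset.mem_image, Finset.mem_range] at hi hi'
      obtain ⟨m, hm, rfl⟩ := hi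
      obtain ⟨m', hm', he⟩ := hi'
      omega
    rw [← hU, Finset.sum_union hdisj,
      Finset.sum_image (fun x hx y hy hxy => by
        simp only [Finset.mem_coe, Finset.mem_range] at hx hy; omega),
      Finset.sum_image (fun x hx y hy hxy => by
        simp only [Finset.mem_coe, Finset.mem_range] at hx hy; omega)]
  -- masses
  set M : ℝ := ∑ m ∈ Finset.range a, w (n - 1 - 2*m) with hM_def
  set M' : ℝ := -∑ m ∈ Finset.range b, w (n - 2 - 2*m) with hM'_def
  have hM_pos : 0 < M := by
    rw [hM_def]
    exact Finset.sum_pos (fun m hm => hwA m (Finset.mem_range.mp hm))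
      (Finset.nonempty_range_iff.mpr (by omega))
  have hM'_pos : 0 < M' := by
    rw [hM'_def, neg_pos]
    exact Finset.sum_neg (fun m hm => hwB m (Finset.mem_range.mp hm))
      (Finset.nonempty_range_iff.mpr (by omega))
  -- vanishing sums
  have hvanish : ∀ f : ℝ[X], f.degree < (n:ℕ) → f.eval 0 = 0 →
      ∑ i ∈ Finset.range n, w i * f.eval (t i) = 0 := by
    intro f hdeg h0
    have h := master_sum hn2 ht_injOn ht_ne' f hdeg
    rw [h0, zero_mul] at h
    simpa only [hw_def, hP_def] using h
  -- the total mass difference is nonzero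
  have hMM' : M ≠ M' := by
    set f0 : ℝ[X] := ((Finset.range n).erase 0).prod (fun j => X - C (t j)) with hf0_def
    have hf0monic : f0.Monic := monic_prod_of_monic _ _ (fun j _ => monic_X_sub_C _)
    have hf0nd : f0.natDegree = n - 1 := by
      rw [hf0_def, natDegree_prod_of_monic _ _ (fun j _ => monic_X_sub_C _)]
      simp [Finset.card_erase_of_mem (Finset.mem_range.mpr (by omega : 0 < n))]
    have hf0deg : f0.degree < (n:ℕ) := by
      calc f0.degree ≤ f0.natDegree := Polynomial.degree_le_natDegree
        _ < (n : WithBot ℕ) := by exact_mod_cast (by omega : f0.natDegree < n)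
    have heval : ∀ z : ℝ, f0.eval z = ∏ j ∈ (Finset.range n).erase 0, (z - t j) := by
      intro z
      rw [hf0_def, Polynomial.eval_prod]
      exact Finset.prod_congr rfl fun j _ => by simp
    have hmaster := master_sum hn2 ht_injOn ht_ne' f0 hf0deg
    have hcollapse : ∑ i ∈ Finset.range n,
        (t i)⁻¹ * (∏ j ∈ (Finset.range n).erase i, (t i - t j))⁻¹ * f0.eval (t i)
        = w 0 * f0.eval (t 0) := by
      rw [show w 0 * f0.eval (t 0)
          = (t 0)⁻¹ * (∏ j ∈ (Finset.range n).erase 0, (t 0 - t j))⁻¹ * f0.eval (t 0) from by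
        simp only [hw_def, hP_def]]
      refine Finset.sum_eq_single_of_mem 0 (Finset.mem_range.mpr (by omega : 0 < n))
        (fun i hi hne => ?_)
      have hz : f0.eval (t i) = 0 := by
        rw [heval]
        exact Finset.prod_eq_zero (Finset.mem_erase.mpr ⟨hne, hi⟩) (by ring)
      rw [hz, mul_zero]
    rw [hcollapse] at hmaster
    have hfz : f0.eval (t 0) ≠ 0 := by
      rw [heval]
      refine Finset.prod_ne_zero_iff.mpr fun j hj => ?_
      have : j ≠ 0 := (Finset.mem_erase.mp hj).1
      exact sub_ne_zero.mpr fun he => this (ht_inj he.symm)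
    have hf00 : f0.eval 0 ≠ 0 := by
      rw [heval]
      refine Finset.prod_ne_zero_iff.mpr fun j hj => ?_
      have := ht_pos j
      intro hz
      nlinarith
    have hS_ne : ∑ i ∈ Finset.range n,
        (t i)⁻¹ * (∏ j ∈ (Finset.range n).erase i, (t i - t j))⁻¹ ≠ 0 := by
      intro hz
      rw [hz, mul_zero] at hmaster
      exact mul_ne_zero (hw_ne 0 (Finset.mem_range.mpr (by omega))) hfz hmaster
    have hSsum : ∑ i ∈ Finset.range n, w i = M - M' := by
      rw [hsplit w, hM_def, hM'_def]; ring
    intro hMeq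
    apply hS_ne
    have : ∑ i ∈ Finset.range n, w i = 0 := by rw [hSsum, hMeq, sub_self]
    calc ∑ i ∈ Finset.range n, (t i)⁻¹ * (∏ j ∈ (Finset.range n).erase i, (t i - t j))⁻¹
        = ∑ i ∈ Finset.range n, w i := by
          refine Finset.sum_congr rfl fun i _ => by simp only [hw_def, hP_def]
      _ = 0 := this
  -- transfer lemma
  have hAB : ∀ F : ℝ → ℝ, (∑ i ∈ Finset.range n, w i * F (t i) = 0) →
      ∑ m ∈ Finset.range a, w (n - 1 - 2*m) * F (t (n - 1 - 2*m))
        = - ∑ m ∈ Finset.range b, w (n - 2 - 2*m) * F (t (n - 2 - 2*m)) := by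
    intro F hF
    have := hsplit (fun i => w i * F (t i))
    rw [hF] at this
    linarith
  -- the model parameters
  set x : Fin J → ℝ := fun j =>
    if (j:ℕ) < a then t (n - 1 - 2*(j:ℕ)) else 1/((j:ℕ)+3) with hx_def
  set ν : Fin J → ℝ := fun j =>
    if (j:ℕ) < a then w (n - 1 - 2*(j:ℕ)) / M else 0 with hν_def
  set y : Fin J → ℝ := fun j =>
    if (j:ℕ) < b then t (n - 2 - 2*(j:ℕ)) else 1/((j:ℕ)+3) with hy_def
  set ν' : Fin J → ℝ := fun j =>
    if (j:ℕ) < b then (- w (n - 2 - 2*(j:ℕ))) / M' else 0 with hν'_def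
  -- sum transfer helpers
  have hfilterA : (Finset.range J).filter (fun m => m < a) = Finset.range a := by
    ext m
    simp only [Finset.mem_filter, Finset.mem_range]
    omega
  have hfilterB : (Finset.range J).filter (fun m => m < b) = Finset.range b := by
    ext m
    simp only [Finset.mem_filter, Finset.mem_range]
    omega
  have hsumA : ∀ F : ℝ → ℝ, ∑ j : Fin J, ν j * F (x j)
      = (∑ m ∈ Finset.range a, w (n - 1 - 2*m) * F (t (n - 1 - 2*m))) / M := by
    intro F
    have h1 : ∀ j : Fin J, ν j * F (x j)
        = if (j:ℕ) < a then w (n - 1 - 2*(j:ℕ)) * F (t (n - 1 - 2*(j:ℕ))) / M else 0 := by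
      intro j
      by_cases hj : (j:ℕ) < a
      · simp only [hν_def, hx_def, if_pos hj]
        ring
      · simp only [hν_def, hx_def, if_neg hj, zero_mul]
    rw [Finset.sum_congr rfl (fun j _ => h1 j)]
    rw [Fin.sum_univ_eq_sum_range
      (fun m => if m < a then w (n - 1 - 2*m) * F (t (n - 1 - 2*m)) / M else 0) J]
    rw [← Finset.sum_filter, hfilterA, Finset.sum_div]
  have hsumB : ∀ F : ℝ → ℝ, ∑ j : Fin J, ν' j * F (y j)
      = (∑ m ∈ Finset.range b, (- w (n - 2 - 2*m)) * F (t (n - 2 - 2*m))) / M' := by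
    intro F
    have h1 : ∀ j : Fin J, ν' j * F (y j)
        = if (j:ℕ) < b then (- w (n - 2 - 2*(j:ℕ))) * F (t (n - 2 - 2*(j:ℕ))) / M' else 0 := by
      intro j
      by_cases hj : (j:ℕ) < b
      · simp only [hν'_def, hy_def, if_pos hj]
        ring
      · simp only [hν'_def, hy_def, if_neg hj, zero_mul]
    rw [Finset.sum_congr rfl (fun j _ => h1 j)]
    rw [Fin.sum_univ_eq_sum_range
      (fun m => if m < b then (- w (n - 2 - 2*m)) * F (t (n - 2 - 2*m)) / M' else 0) J]
    rw [← Finset.sum_filter, hfilterB, Finset.sum_div]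
  -- D : the common conditional denominator (times M resp. M')
  set D : ℝ := ∑ m ∈ Finset.range a, w (n - 1 - 2*m) * (1 - (1 - t (n - 1 - 2*m))^K)
    with hD_def
  have hD_pos : 0 < D := by
    rw [hD_def]
    refine Finset.sum_pos (fun m hm => ?_) (Finset.nonempty_range_iff.mpr (by omega))
    rw [Finset.mem_range] at hm
    refine mul_pos (hwA m hm) ?_
    have h1 : 0 < t (n - 1 - 2*m) := ht_pos _
    have h2 : t (n - 1 - 2*m) < 1 := ht_lt1 _ (by omega)
    have h3 : (1 - t (n - 1 - 2*m))^K < 1 :=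
      pow_lt_one₀ (by linarith) (by linarith) (by omega)
    linarith
  -- the vanishing of the "zero moment"
  have hmom0 : ∑ i ∈ Finset.range n, w i * (1 - (1 - t i)^K) = 0 := by
    have hdeg : ((1:ℝ[X]) - (1 - X)^K).degree < (n : WithBot ℕ) := by
      have hnd : ((1:ℝ[X]) - (1 - X)^K).natDegree ≤ K := by
        refine le_trans (natDegree_sub_le _ _) ?_
        simp only [natDegree_one, natDegree_pow]
        have : ((1:ℝ[X]) - X).natDegree ≤ 1 :=
          le_trans (natDegree_sub_le _ _) (by simp)
        calc max 0 (K * ((1:ℝ[X]) - X).natDegree) ≤ max 0 (K * 1) := by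
              exact max_le_max (le_refl 0) (Nat.mul_le_mul_left K this)
          _ ≤ K := by omega
      calc ((1:ℝ[X]) - (1 - X)^K).degree ≤ (((1:ℝ[X]) - (1 - X)^K).natDegree : WithBot ℕ) :=
            Polynomial.degree_le_natDegree
        _ < (n : WithBot ℕ) := by exact_mod_cast (by omega : ((1:ℝ[X]) - (1 - X)^K).natDegree < n)
    have := hvanish ((1:ℝ[X]) - (1 - X)^K) hdeg (by simp)
    simpa using this
  have hDB : ∑ m ∈ Finset.range b, w (n - 2 - 2*m) * (1 - (1 - t (n - 2 - 2*m))^K) = -D := by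
    have := hAB (fun z => 1 - (1 - z)^K) hmom0
    rw [hD_def]
    linarith [this]
  -- moments vanish
  have hmom : ∀ s : ℕ, 1 ≤ s → s ≤ K →
      ∑ i ∈ Finset.range n, w i * (t i ^ s * (1 - t i)^(K - s)) = 0 := by
    intro s hs1 hsK
    have hdeg : ((X:ℝ[X])^s * (1 - X)^(K - s)).degree < (n : WithBot ℕ) := by
      have hnd : ((X:ℝ[X])^s * (1 - X)^(K - s)).natDegree ≤ K := by
        refine le_trans (natDegree_mul_le) ?_
        have h1 : ((X:ℝ[X])^s).natDegree = s := natDegree_X_pow s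
        have h2 : (((1:ℝ[X]) - X)^(K - s)).natDegree ≤ K - s := by
          rw [natDegree_pow]
          have : ((1:ℝ[X]) - X).natDegree ≤ 1 :=
            le_trans (natDegree_sub_le _ _) (by simp)
          calc (K - s) * ((1:ℝ[X]) - X).natDegree ≤ (K - s) * 1 :=
                Nat.mul_le_mul_left _ this
            _ = K - s := by omega
        omega
      calc ((X:ℝ[X])^s * (1 - X)^(K - s)).degree
          ≤ (((X:ℝ[X])^s * (1 - X)^(K - s)).natDegree : WithBot ℕ) :=
            Polynomial.degree_le_natDegree
        _ < (n : WithBot ℕ) := by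
            exact_mod_cast (by omega : ((X:ℝ[X])^s * (1 - X)^(K - s)).natDegree < n)
    have h0 : ((X:ℝ[X])^s * (1 - X)^(K - s)).eval 0 = 0 := by
      simp [zero_pow (by omega : s ≠ 0)]
    have := hvanish ((X:ℝ[X])^s * (1 - X)^(K - s)) hdeg h0
    simpa using this
  -- now provide the witnesses
  refine ⟨ν, ν', fun j _ => x j, fun j _ => y j, ?_, ?_, ?_, ?_, ?_, ?_, ?_, ?_, ?_, ?_⟩
  · -- ν nonneg
    intro j
    simp only [hν_def]
    by_cases hj : (j:ℕ) < a
    · rw [if_pos hj]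
      exact div_nonneg (hwA _ hj).le hM_pos.le
    · rw [if_neg hj]
  · intro j
    simp only [hν'_def]
    by_cases hj : (j:ℕ) < b
    · rw [if_pos hj]
      exact div_nonneg (by linarith [hwB _ hj]) hM'_pos.le
    · rw [if_neg hj]
  · -- sums to one
    have := hsumA (fun _ => 1)
    simp only [mul_one] at this
    rw [this, ← hM_def, div_self hM_pos.ne']
  · have := hsumB (fun _ => 1)
    simp only [mul_one] at this
    rw [this]
    rw [show ∑ m ∈ Finset.range b, -w (n - 2 - 2*m)
      = -∑ m ∈ Finset.range b, w (n - 2 - 2*m) from by rw [Finset.sum_neg_distrib]]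
    rw [← hM'_def, div_self hM'_pos.ne']
  · -- range of q
    intro j k
    simp only [hx_def]
    by_cases hj : (j:ℕ) < a
    · rw [if_pos hj]
      exact ⟨ht_pos _, ht_lt1 _ (by omega)⟩
    · rw [if_neg hj]
      constructor
      · positivity
      · rw [div_lt_one (by positivity)]
        have : (0:ℝ) ≤ (j:ℕ) := Nat.cast_nonneg _
        linarith
  · intro j k
    simp only [hy_def]
    by_cases hj : (j:ℕ) < b
    · rw [if_pos hj]
      exact ⟨ht_pos _, ht_lt1 _ (by omega)⟩
    · rw [if_neg hj]
      constructor
      · positivity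
      · rw [div_lt_one (by positivity)]
        have : (0:ℝ) ≤ (j:ℕ) := Nat.cast_nonneg _
        linarith
  · -- distinctness for q
    intro k j j' hne
    have hvalne : (j:ℕ) ≠ (j':ℕ) := fun hv => hne (Fin.ext hv)
    simp only [hx_def]
    by_cases hj : (j:ℕ) < a <;> by_cases hj' : (j':ℕ) < a
    · rw [if_pos hj, if_pos hj']
      intro he
      have := ht_inj he
      omega
    · rw [if_pos hj, if_neg hj']
      intro he
      have h1 : (1:ℝ)/2 < t (n - 1 - 2*(j:ℕ)) := ht_half _
      have h2 : (1:ℝ)/((j':ℕ)+3) ≤ 1/2 := by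
        rw [div_le_div_iff₀ (by positivity) (by norm_num)]
        have : (0:ℝ) ≤ (j':ℕ) := Nat.cast_nonneg _
        linarith
      linarith [he ▸ h1]
    · rw [if_neg hj, if_pos hj']
      intro he
      have h1 : (1:ℝ)/2 < t (n - 1 - 2*(j':ℕ)) := ht_half _
      have h2 : (1:ℝ)/((j:ℕ)+3) ≤ 1/2 := by
        rw [div_le_div_iff₀ (by positivity) (by norm_num)]
        have : (0:ℝ) ≤ (j:ℕ) := Nat.cast_nonneg _
        linarith
      linarith [he ▸ h2]
    · rw [if_neg hj, if_neg hj']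
      intro he
      rw [div_eq_div_iff (by positivity) (by positivity)] at he
      have : ((j:ℕ):ℝ) = ((j':ℕ):ℝ) := by linarith
      exact hvalne (by exact_mod_cast this)
  · -- distinctness for q'
    intro k j j' hne
    have hvalne : (j:ℕ) ≠ (j':ℕ) := fun hv => hne (Fin.ext hv)
    simp only [hy_def]
    by_cases hj : (j:ℕ) < b <;> by_cases hj' : (j':ℕ) < b
    · rw [if_pos hj, if_pos hj']
      intro he
      have := ht_inj he
      omega
    · rw [if_pos hj, if_neg hj']
      intro he
      have h1 : (1:ℝ)/2 < t (n - 2 - 2*(j:ℕ)) := ht_half _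
      have h2 : (1:ℝ)/((j':ℕ)+3) ≤ 1/2 := by
        rw [div_le_div_iff₀ (by positivity) (by norm_num)]
        have : (0:ℝ) ≤ (j':ℕ) := Nat.cast_nonneg _
        linarith
      linarith [he ▸ h1]
    · rw [if_neg hj, if_pos hj']
      intro he
      have h1 : (1:ℝ)/2 < t (n - 2 - 2*(j':ℕ)) := ht_half _
      have h2 : (1:ℝ)/((j:ℕ)+3) ≤ 1/2 := by
        rw [div_le_div_iff₀ (by positivity) (by norm_num)]
        have : (0:ℝ) ≤ (j:ℕ) := Nat.cast_nonneg _
        linarith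
      linarith [he ▸ h2]
    · rw [if_neg hj, if_neg hj']
      intro he
      rw [div_eq_div_iff (by positivity) (by positivity)] at he
      have : ((j:ℕ):ℝ) = ((j':ℕ):ℝ) := by linarith
      exact hvalne (by exact_mod_cast this)
  · -- main conditional equality
    intro h hne
    beta_reduce
    set s : ℕ := ∑ k, (h k).toNat with hs_def
    have hsK : s ≤ K := by
      rw [hs_def]
      calc ∑ k, (h k).toNat ≤ ∑ _k : Fin K, 1 :=
          Finset.sum_le_sum fun k _ => Bool.toNat_le (h k)
        _ = K := by simp
    have hs1 : 1 ≤ s := by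
      have : ∃ k, h k ≠ false := by
        by_contra hc
        push_neg at hc
        exact hne (funext hc)
      obtain ⟨k, hk⟩ := this
      rw [Bool.ne_false_iff] at hk
      rw [hs_def]
      calc 1 = (h k).toNat := by rw [hk]; rfl
        _ ≤ ∑ k, (h k).toNat :=
          Finset.single_le_sum (f := fun k => (h k).toNat)
            (fun _ _ => Nat.zero_le _) (Finset.mem_univ k)
    have hprod : ∀ z : ℝ,
        (∏ k, z ^ (h k).toNat * (1 - z) ^ (1 - (h k).toNat)) = z ^ s * (1 - z)^(K - s) := by
      intro z
      rw [Finset.prod_mul_distrib, Finset.prod_pow_eq_pow_sum, Finset.prod_pow_eq_pow_sum,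
        ← hs_def]
      have h1 : ∑ k, ((1:ℕ) - (h k).toNat) + s = K := by
        rw [hs_def, ← Finset.sum_add_distrib]
        calc (∑ k : Fin K, ((1 - (h k).toNat) + (h k).toNat)) = ∑ _k : Fin K, 1 :=
            Finset.sum_congr rfl fun k _ => by cases h k <;> rfl
          _ = K := by simp
      have h2 : ∑ k, ((1:ℕ) - (h k).toNat) = K - s := by omega
      rw [h2]
    have hprod0 : ∀ z : ℝ, (∏ _k : Fin K, (1 - z)) = (1 - z)^K := by
      intro z
      rw [Finset.prod_const]
      simp
    -- numerators
    have hnumL : (∑ j, ν j * ∏ k, x j ^ (h k).toNat * (1 - x j) ^ (1 - (h k).toNat))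
        = (∑ m ∈ Finset.range a,
            w (n - 1 - 2*m) * (t (n - 1 - 2*m) ^ s * (1 - t (n - 1 - 2*m))^(K - s))) / M := by
      rw [Finset.sum_congr rfl (fun j _ => by rw [hprod (x j)])]
      exact hsumA (fun z => z ^ s * (1 - z)^(K - s))
    have hnumR : (∑ j, ν' j * ∏ k, y j ^ (h k).toNat * (1 - y j) ^ (1 - (h k).toNat))
        = (∑ m ∈ Finset.range b,
            (- w (n - 2 - 2*m)) * (t (n - 2 - 2*m) ^ s * (1 - t (n - 2 - 2*m))^(K - s))) / M' := by
      rw [Finset.sum_congr rfl (fun j _ => by rw [hprod (y j)])]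
      exact hsumB (fun z => z ^ s * (1 - z)^(K - s))
    have hnum_eq : ∑ m ∈ Finset.range a,
            w (n - 1 - 2*m) * (t (n - 1 - 2*m) ^ s * (1 - t (n - 1 - 2*m))^(K - s))
        = ∑ m ∈ Finset.range b,
            (- w (n - 2 - 2*m)) * (t (n - 2 - 2*m) ^ s * (1 - t (n - 2 - 2*m))^(K - s)) := by
      have := hAB (fun z => z ^ s * (1 - z)^(K - s)) (hmom s hs1 hsK)
      rw [this, ← Finset.sum_neg_distrib]
      exact Finset.sum_congr rfl fun m _ => by ring
    -- denominators
    have hdenL : (1 - ∑ j, ν j * ∏ _k : Fin K, (1 - x j)) = D / M := by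
      rw [Finset.sum_congr rfl (fun j _ => by rw [hprod0 (x j)])]
      rw [hsumA (fun z => (1 - z)^K)]
      rw [eq_div_iff hM_pos.ne', sub_mul, one_mul,
        div_mul_cancel₀ _ hM_pos.ne', hD_def, hM_def]
      rw [← Finset.sum_sub_distrib]
      exact Finset.sum_congr rfl fun m _ => by ring
    have hdenR : (1 - ∑ j, ν' j * ∏ _k : Fin K, (1 - y j)) = D / M' := by
      rw [Finset.sum_congr rfl (fun j _ => by rw [hprod0 (y j)])]
      rw [hsumB (fun z => (1 - z)^K)]
      rw [eq_div_iff hM'_pos.ne', sub_mul, one_mul,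
        div_mul_cancel₀ _ hM'_pos.ne']
      have : M' - ∑ m ∈ Finset.range b, (- w (n - 2 - 2*m)) * (1 - t (n - 2 - 2*m))^K
          = - ∑ m ∈ Finset.range b, w (n - 2 - 2*m) * (1 - (1 - t (n - 2 - 2*m))^K) := by
        rw [hM'_def, ← Finset.sum_neg_distrib, ← Finset.sum_sub_distrib,
          ← Finset.sum_neg_distrib]
        exact Finset.sum_congr rfl fun m _ => by ring
      rw [this, hDB, neg_neg]
    rw [hnumL, hnumR, hdenL, hdenR, hnum_eq,
      div_div_div_cancel_right₀ hM_pos.ne', div_div_div_cancel_right₀ hM'_pos.ne']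
  · -- the zero cells differ
    beta_reduce
    have hprod0 : ∀ z : ℝ, (∏ _k : Fin K, (1 - z)) = (1 - z)^K := by
      intro z
      rw [Finset.prod_const]
      simp
    have hpi0L : (∑ j, ν j * ∏ _k : Fin K, (1 - x j)) = (M - D) / M := by
      rw [Finset.sum_congr rfl (fun j _ => by rw [hprod0 (x j)])]
      rw [hsumA (fun z => (1 - z)^K)]
      congr 1
      rw [hM_def, hD_def, ← Finset.sum_sub_distrib]
      exact Finset.sum_congr rfl fun m _ => by ring
    have hpi0R : (∑ j, ν' j * ∏ _k : Fin K, (1 - y j)) = (M' - D) / M' := by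
      rw [Finset.sum_congr rfl (fun j _ => by rw [hprod0 (y j)])]
      rw [hsumB (fun z => (1 - z)^K)]
      congr 1
      calc ∑ m ∈ Finset.range b, (- w (n - 2 - 2*m)) * (1 - t (n - 2 - 2*m))^K
          = - ∑ m ∈ Finset.range b, w (n - 2 - 2*m)
            + ∑ m ∈ Finset.range b, w (n - 2 - 2*m) * (1 - (1 - t (n - 2 - 2*m))^K) := by
            rw [← Finset.sum_neg_distrib, ← Finset.sum_add_distrib]
            exact Finset.sum_congr rfl fun m _ => by ring
        _ = M' - D := by rw [hDB, hM'_def]; ring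
    rw [hpi0L, hpi0R]
    intro heq
    rw [div_eq_div_iff hM_pos.ne' hM'_pos.ne'] at heq
    have h2 : D * M' = D * M := by linear_combination -heq
    exact hMM' (mul_left_cancel₀ hD_pos.ne' h2).symm
end

section
/- Let K ≥ 2 and let x_{ℓk} ∈ (0,1) for ℓ, k ∈ {1,...,K} be such that for each k the values x_{1k},...,x_{Kk} are pairwise distinct. Consider the (2^K - 1) × K matrix X^K whose rows are indexed by h ∈ H* and whose (h, ℓ) entry is ∏_{k=1}^K x_{ℓk}^{h_k}. Then X^K has full column rank; that is, if v ∈ ℝ^K satisfies ∑_{ℓ=1}^K v_ℓ ∏_{k=1}^K x_{ℓk}^{h_k} = 0 for all h ∈ H*, then v = 0. -/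
open Finset

/-- For `K ≥ 2` and `x_{ℓk} ∈ (0,1)` with, for each `k`, the values
`x_{1k},...,x_{Kk}` pairwise distinct, the `(2^K - 1) × K` matrix with rows indexed by
`h ∈ H*` and `(h, ℓ)` entry `∏_k x_{ℓk}^{h_k}` has full column rank: if
`∑_ℓ v_ℓ ∏_k x_{ℓk}^{h_k} = 0` for all `h ∈ H*`, then `v = 0`. -/
theorem stmt5 (K : ℕ) (hK : 2 ≤ K) (x : Fin K → Fin K → ℝ)
    (hx : ∀ l k, x l k ∈ Set.Ioo (0 : ℝ) 1)
    (hdist : ∀ k, ∀ l l' : Fin K, l ≠ l' → x l k ≠ x l' k)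
    (v : Fin K → ℝ)
    (hv : ∀ h : Fin K → Bool, h ≠ (fun _ => false) →
      ∑ l, v l * ∏ k, x l k ^ (h k).toNat = 0) :
    v = 0 := by
  funext l0
  simp only [Pi.zero_apply]
  set S0 := (univ : Finset (Fin K)).erase l0 with hS0
  -- the key vanishing sum
  have inner : ∀ T ∈ S0.powerset,
      ∑ l', v l' * (x l' l0 * ∏ l ∈ T, x l' l) = 0 := by
    intro T hT
    rw [Finset.mem_powerset] at hT
    have hl0T : l0 ∉ T := fun h => (Finset.mem_erase.mp (hT h)).1 rfl
    have := hv (fun k => decide (k ∈ insert l0 T)) (by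
      intro h
      have := congrFun h l0
      simp at this)
    rw [← this]
    refine Finset.sum_congr rfl fun l' _ => ?_
    congr 1
    have : ∀ k : Fin K, x l' k ^ ((fun k => decide (k ∈ insert l0 T)) k).toNat
        = if k ∈ insert l0 T then x l' k else 1 := by
      intro k
      by_cases hk : k ∈ insert l0 T <;> simp [hk]
    rw [Finset.prod_congr rfl fun k _ => this k, Finset.prod_ite_mem,
      Finset.univ_inter, Finset.prod_insert hl0T]
  have key : ∑ l', v l' * (x l' l0 * ∏ l ∈ S0, (x l' l - x l l)) = 0 := by
    have expand : ∀ l', ∏ l ∈ S0, (x l' l - x l l)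
        = ∑ T ∈ S0.powerset, (∏ l ∈ T, x l' l) * ∏ l ∈ S0 \ T, (-(x l l)) := by
      intro l'
      simp only [sub_eq_add_neg]
      exact Finset.prod_add _ _ _
    calc ∑ l', v l' * (x l' l0 * ∏ l ∈ S0, (x l' l - x l l))
        = ∑ l', ∑ T ∈ S0.powerset,
            (∏ l ∈ S0 \ T, (-(x l l))) * (v l' * (x l' l0 * ∏ l ∈ T, x l' l)) := by
          refine Finset.sum_congr rfl fun l' _ => ?_
          rw [expand, Finset.mul_sum, Finset.mul_sum]
          refine Finset.sum_congr rfl fun T _ => ?_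
          ring
      _ = ∑ T ∈ S0.powerset, (∏ l ∈ S0 \ T, (-(x l l))) *
            ∑ l', v l' * (x l' l0 * ∏ l ∈ T, x l' l) := by
          rw [Finset.sum_comm]
          exact Finset.sum_congr rfl fun T _ => (Finset.mul_sum _ _ _).symm
      _ = 0 := by
          rw [Finset.sum_eq_zero]
          intro T hT
          rw [inner T hT, mul_zero]
  -- all terms with l' ≠ l0 vanish
  have hzero : ∀ l' ∈ (univ : Finset (Fin K)), l' ≠ l0 →
      v l' * (x l' l0 * ∏ l ∈ S0, (x l' l - x l l)) = 0 := by
    intro l' _ hne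
    have hmem : l' ∈ S0 := Finset.mem_erase.mpr ⟨hne, Finset.mem_univ _⟩
    rw [Finset.prod_eq_zero hmem (by ring)]
    ring
  rw [Finset.sum_eq_single l0 hzero (fun h => absurd (Finset.mem_univ l0) h)] at key
  have hne : x l0 l0 * ∏ l ∈ S0, (x l0 l - x l l) ≠ 0 := by
    apply mul_ne_zero (ne_of_gt (hx l0 l0).1)
    apply Finset.prod_ne_zero_iff.mpr
    intro l hl
    have hll0 : l ≠ l0 := (Finset.mem_erase.mp hl).1
    exact sub_ne_zero_of_ne (hdist l l0 l hll0.symm)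
  exact (mul_eq_zero.mp key).resolve_right hne
end

section
/- Let J ≥ 1, let K be an integer with 1 ≤ K < 2J, and let 0 < α < 1/(2J). Define ν_{Q,j} = binom(2J, 2j)/(2^{2J-1} - 1) and ν_{R,j} = binom(2J, 2j-1)/2^{2J-1} for j = 1,...,J, and q_{Q,jk} = α(2j), q_{R,jk} = α(2j-1) for j = 1,...,J and k = 1,...,K. Then for every h ∈ H*, ∑_{j=1}^J ν_{Q,j} ∏_{k=1}^K q_{Q,jk}^{h_k} = A · ∑_{j=1}^J ν_{R,j} ∏_{k=1}^K q_{R,jk}^{h_k}, where A = 2^{2J-1}/(2^{2J-1} - 1) ≠ 1. -/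
open Finset

open Function


private lemma my_fwdDiff_iter_pow_zero (m : ℕ) : ∀ n, m < n →
    (fwdDiff (1:ℕ))^[n] (fun x : ℕ => (x : ℝ) ^ m) = fun _ => 0 := by
  induction m using Nat.strong_induction_on with
  | _ m IH =>
    intro n hn
    obtain ⟨n, rfl⟩ : ∃ n', n = n' + 1 := ⟨n - 1, by omega⟩
    rw [Function.iterate_succ_apply]
    have hΔ : fwdDiff (1:ℕ) (fun x : ℕ => (x : ℝ) ^ m) =
        ∑ i ∈ range m, (m.choose i : ℝ) • (fun x : ℕ => (x : ℝ) ^ i) := by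
      ext x
      simp only [fwdDiff, Finset.sum_apply, Pi.smul_apply, smul_eq_mul]
      have hb : ((x : ℝ) + 1) ^ m = ∑ i ∈ range (m + 1), (m.choose i : ℝ) * (x : ℝ) ^ i := by
        rw [add_pow]
        exact Finset.sum_congr rfl fun i _ => by ring
      push_cast
      rw [hb, Finset.sum_range_succ]
      simp
    rw [hΔ, fwdDiff_iter_finset_sum]
    ext y
    rw [Finset.sum_apply]
    refine Finset.sum_eq_zero fun i hi => ?_
    have hi' := Finset.mem_range.mp hi
    rw [fwdDiff_iter_const_smul, IH i hi' n (by omega)]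
    simp

private lemma my_alt_sum (n m : ℕ) (h : m < n) (hm : 0 < m) :
    ∑ k ∈ range (n + 1), (-1 : ℝ) ^ k * (n.choose k : ℝ) * (k : ℝ) ^ m = 0 := by
  have key := fwdDiff_iter_eq_sum_shift (1 : ℕ) (fun x : ℕ => (x : ℝ) ^ m) n 0
  rw [my_fwdDiff_iter_pow_zero m n h] at key
  simp only [zero_add, smul_eq_mul, zsmul_eq_mul] at key
  have key2 : (0:ℝ) = (-1:ℝ)^n * ∑ k ∈ range (n + 1),
      (-1:ℝ) ^ k * (n.choose k : ℝ) * (k : ℝ) ^ m := by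
    rw [Finset.mul_sum]
    refine key.trans (Finset.sum_congr rfl fun k hk => ?_)
    have hk' : k ≤ n := Nat.lt_succ_iff.mp (Finset.mem_range.mp hk)
    have h1 : (-1:ℝ) ^ (n - k) * (-1:ℝ)^k = (-1:ℝ)^n := by
      rw [← pow_add, Nat.sub_add_cancel hk']
    have h2 : ((-1:ℝ)^k)^2 = 1 := by
      rcases Nat.even_or_odd k with he | ho
      · rw [he.neg_one_pow]; norm_num
      · rw [ho.neg_one_pow]; norm_num
    push_cast
    rw [mul_one, ← h1]
    linear_combination (-((-1:ℝ)^(n-k) * (n.choose k : ℝ) * (k:ℝ)^m)) * h2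
  rcases mul_eq_zero.mp key2.symm with h | h
  · exfalso; revert h; positivity
  · exact h

private lemma my_parity (f : ℕ → ℝ) (J : ℕ) :
    ∑ i ∈ range (2 * J), f i = ∑ j ∈ range J, (f (2 * j) + f (2 * j + 1)) := by
  induction J with
  | zero => simp
  | succ J IH =>
    rw [Finset.sum_range_succ, ← IH, Nat.mul_succ]
    rw [show 2 * J + 2 = (2 * J + 1) + 1 from rfl, Finset.sum_range_succ, Finset.sum_range_succ]
    ring

private lemma my_evenodd (J m : ℕ) (hm : 0 < m) (hmJ : m < 2 * J) :
    ∑ j ∈ range J, ((2 * J).choose (2 * (j + 1)) : ℝ) * ((2 * (j + 1) : ℕ) : ℝ) ^ m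
      = ∑ j ∈ range J, ((2 * J).choose (2 * j + 1) : ℝ) * ((2 * j + 1 : ℕ) : ℝ) ^ m := by
  have key := my_alt_sum (2 * J) m hmJ hm
  rw [Finset.sum_range_succ'] at key
  simp only [Nat.cast_zero, zero_pow hm.ne', mul_zero, add_zero] at key
  rw [my_parity (fun k => (-1 : ℝ) ^ (k + 1) * ((2 * J).choose (k + 1) : ℝ) * ((k + 1 : ℕ) : ℝ) ^ m) J] at key
  have key2 : ∑ j ∈ range J,
      (((2 * J).choose (2 * j + 1) : ℝ) * ((2 * j + 1 : ℕ) : ℝ) ^ m * (-1)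
        + ((2 * J).choose (2 * (j + 1)) : ℝ) * ((2 * (j + 1) : ℕ) : ℝ) ^ m) = 0 := by
    rw [← key]
    refine Finset.sum_congr rfl fun j _ => ?_
    have e1 : (-1 : ℝ) ^ (2 * j + 1) = -1 := by
      rw [pow_succ, pow_mul]; norm_num
    have e2 : (-1 : ℝ) ^ (2 * j + 1 + 1) = 1 := by
      rw [pow_succ, e1]; norm_num
    rw [e1, e2, show 2 * j + 1 + 1 = 2 * (j + 1) from by ring]
    ring
  rw [Finset.sum_add_distrib] at key2
  simp only [mul_neg_one, Finset.sum_neg_distrib] at key2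
  linarith [key2]

/-- For `J ≥ 1`, `1 ≤ K < 2J`, and `0 < α < 1/(2J)`, the latent class models
with `ν_{Q,j} = C(2J, 2j)/(2^{2J-1} - 1)`, `ν_{R,j} = C(2J, 2j-1)/2^{2J-1}`,
`q_{Q,jk} = α(2j)`, `q_{R,jk} = α(2j-1)` (for `j = 1,...,J`) satisfy, for every `h ∈ H*`,
`∑_j ν_{Q,j} ∏_k q_{Q,jk}^{h_k} = A · ∑_j ν_{R,j} ∏_k q_{R,jk}^{h_k}`, where
`A = 2^{2J-1}/(2^{2J-1} - 1) ≠ 1`. (Here `j : Fin J` represents the index `j.1 + 1`.) -/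
theorem stmt7 (K J : ℕ) (hK : 1 ≤ K) (hJ : 1 ≤ J) (hKJ : K < 2 * J)
    (α : ℝ) (hα0 : 0 < α) (hα1 : α < 1 / (2 * J)) :
    (∀ h : Fin K → Bool, h ≠ (fun _ => false) →
        (∑ j : Fin J, (((2 * J).choose (2 * (j.1 + 1)) : ℝ) / ((2 : ℝ) ^ (2 * J - 1) - 1)) *
            ∏ k, (α * (2 * ((j.1 : ℝ) + 1))) ^ (h k).toNat) =
          ((2 : ℝ) ^ (2 * J - 1) / ((2 : ℝ) ^ (2 * J - 1) - 1)) *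
            ∑ j : Fin J, (((2 * J).choose (2 * (j.1 + 1) - 1) : ℝ) / (2 : ℝ) ^ (2 * J - 1)) *
              ∏ k, (α * (2 * ((j.1 : ℝ) + 1) - 1)) ^ (h k).toNat) ∧
      (2 : ℝ) ^ (2 * J - 1) / ((2 : ℝ) ^ (2 * J - 1) - 1) ≠ 1 := by
  have hD2 : (2 : ℝ) ≤ (2 : ℝ) ^ (2 * J - 1) := by
    calc (2:ℝ) = 2 ^ 1 := (pow_one 2).symm
    _ ≤ 2 ^ (2 * J - 1) := by
        apply pow_le_pow_right₀ (by norm_num)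
        omega
  set D : ℝ := (2 : ℝ) ^ (2 * J - 1) with hD
  have hD0 : D ≠ 0 := by linarith
  have hD1 : D - 1 ≠ 0 := by linarith
  constructor
  · intro h hh
    set M : ℕ := ∑ k, (h k).toNat with hM
    have hM1 : 0 < M := by
      by_contra hc
      push_neg at hc
      apply hh
      funext k
      have h0 := Finset.sum_eq_zero_iff.mp (Nat.le_zero.mp hc) k (Finset.mem_univ k)
      cases hk : h k
      · rfl
      · rw [hk] at h0; simp at h0
    have hMK : M ≤ K := by
      calc M ≤ ∑ _k : Fin K, 1 := Finset.sum_le_sum fun k _ => by cases h k <;> simp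
      _ = K := by simp
    have hM2J : M < 2 * J := lt_of_le_of_lt hMK hKJ
    have hprod : ∀ x : ℝ, (∏ k, x ^ (h k).toNat) = x ^ M := by
      intro x
      rw [hM, ← Finset.prod_pow_eq_pow_sum]
    have key := my_evenodd J M hM1 hM2J
    simp only [hprod]
    rw [Fin.sum_univ_eq_sum_range
      (fun j => (((2 * J).choose (2 * (j + 1)) : ℝ) / (D - 1)) * (α * (2 * ((j : ℝ) + 1))) ^ M)]
    rw [Fin.sum_univ_eq_sum_range
      (fun j => (((2 * J).choose (2 * (j + 1) - 1) : ℝ) / D) * (α * (2 * ((j : ℝ) + 1) - 1)) ^ M)]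
    have hS : ∑ j ∈ range J, ((2 * J).choose (2 * (j + 1)) : ℝ) * (α * (2 * ((j : ℝ) + 1))) ^ M
        = ∑ j ∈ range J, ((2 * J).choose (2 * (j + 1) - 1) : ℝ) * (α * (2 * ((j : ℝ) + 1) - 1)) ^ M := by
      calc ∑ j ∈ range J, ((2 * J).choose (2 * (j + 1)) : ℝ) * (α * (2 * ((j : ℝ) + 1))) ^ M
          = α ^ M * ∑ j ∈ range J,
              ((2 * J).choose (2 * (j + 1)) : ℝ) * ((2 * (j + 1) : ℕ) : ℝ) ^ M := by
            rw [Finset.mul_sum]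
            refine Finset.sum_congr rfl fun j _ => ?_
            rw [mul_pow]
            push_cast
            ring
        _ = α ^ M * ∑ j ∈ range J,
              ((2 * J).choose (2 * j + 1) : ℝ) * ((2 * j + 1 : ℕ) : ℝ) ^ M := by rw [key]
        _ = ∑ j ∈ range J,
              ((2 * J).choose (2 * (j + 1) - 1) : ℝ) * (α * (2 * ((j : ℝ) + 1) - 1)) ^ M := by
            rw [Finset.mul_sum]
            refine Finset.sum_congr rfl fun j _ => ?_
            rw [show 2 * (j + 1) - 1 = 2 * j + 1 from by omega, mul_pow]
            push_cast
            ring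
    simp only [div_mul_eq_mul_div]
    rw [← Finset.sum_div, ← Finset.sum_div, hS]
    rw [← mul_div_assoc, mul_comm D, mul_div_assoc, div_self hD0, mul_one]
  · intro hcontra
    rw [div_eq_one_iff_eq hD1] at hcontra
    linarith
end

section
/- Let K ≥ 3, 1 < K' < K, and let (n_h)_{h ∈ H*} be nonnegative reals with total n = ∑_{h ∈ H*} n_h > 0 and sample proportions π̃_h = n_h/n. Let G = {0,1}^{K'}, G* = G \ {0}, and define marginal proportions π̃_{g+} = ∑_{h ∈ H*} π̃_h I((h_1,...,h_{K'}) = g) for g ∈ G, with π̃_{0+} the value at g = (0,...,0). Assume π̃_{g+} > 0 for all g ∈ G* and π̃_{0+} < 1. Let n† = n(1 - π̃_{0+}) and π̃†_g = π̃_{g+}/(1 - π̃_{0+}) for g ∈ G*. Then n·[1 + Π̃_{odd,+}/Π̃_{even,+} - π̃_{0+}] = n†·[1 + Π̃†_{odd}/Π̃†_{even}], where Π̃_{odd,+} = ∏_{g ∈ G*} π̃_{g+}^{I_odd(g)}, Π̃_{even,+} = ∏_{g ∈ G*} π̃_{g+}^{I_even(g)}, Π̃†_{odd} = ∏_{g ∈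 G*} (π̃†_g)^{I_odd(g)}, and Π̃†_{even} = ∏_{g ∈ G*} (π̃†_g)^{I_even(g)}. (That is, the population size estimator under the K'-list marginal no-highest-order-interaction assumption using all K lists equals the estimator under the no-highest-order-interaction assumption using only the first K' lists.) -/
open Finset

/-- `H* = {0,1}^K \ {(0,...,0)}` as a finset. -/
def Hstar (K : ℕ) : Finset (Fin K → Bool) :=
  Finset.univ.filter (fun h => h ≠ (fun _ => false))

/-- `∏_{h ∈ s} p(h)^{I_odd(h)}`, where `I_odd(h) = I(∑_k h_k odd)`. -/
noncomputable def pOdd {K : ℕ} (s : Finset (Fin K → Bool)) (p : (Fin K → Bool) → ℝ) : ℝ :=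
  ∏ h ∈ s, if Odd (∑ k, (h k).toNat) then p h else 1

/-- `∏_{h ∈ s} p(h)^{I_even(h)}`, where `I_even(h) = I(∑_k h_k even)`. -/
noncomputable def pEven {K : ℕ} (s : Finset (Fin K → Bool)) (p : (Fin K → Bool) → ℝ) : ℝ :=
  ∏ h ∈ s, if Even (∑ k, (h k).toNat) then p h else 1

/-- On the full cube `{0,1}^{K'}` (with `K' > 0`), the number of odd-weight vectors equals
the number of even-weight vectors. -/
lemma parity_card (K' : ℕ) (hK' : 0 < K') :
    ((univ : Finset (Fin K' → Bool)).filter (fun g => Odd (∑ k, (g k).toNat))).card =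
    ((univ : Finset (Fin K' → Bool)).filter (fun g => ¬ Odd (∑ k, (g k).toNat))).card := by
  set i : Fin K' := ⟨0, hK'⟩
  have hflip : ∀ g : Fin K' → Bool,
      (Odd (∑ k, ((Function.update g i (!(g i))) k).toNat) ↔ ¬ Odd (∑ k, (g k).toNat)) := by
    intro g
    have h1 : ∑ k, (g k).toNat = (g i).toNat + ∑ k ∈ univ.erase i, (g k).toNat :=
      (Finset.add_sum_erase univ _ (mem_univ i)).symm
    have h2 : ∑ k, ((Function.update g i (!(g i))) k).toNat
        = (!(g i)).toNat + ∑ k ∈ univ.erase i, (g k).toNat := by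
      rw [← Finset.add_sum_erase univ (fun k => ((Function.update g i (!(g i))) k).toNat)
        (mem_univ i), Function.update_self]
      congr 1
      exact Finset.sum_congr rfl fun k hk => by
        rw [Function.update_of_ne (Finset.ne_of_mem_erase hk)]
    rw [h1, h2]
    cases g i <;> simp [Nat.odd_iff] <;> omega
  have hinv : ∀ g : Fin K' → Bool,
      Function.update (Function.update g i (!(g i))) i
        (!((Function.update g i (!(g i))) i)) = g := by
    intro g
    simp [Function.update_idem]
  apply Finset.card_nbij' (i := fun g => Function.update g i (!(g i)))
      (j := fun g => Function.update g i (!(g i)))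
  · intro g hg
    rw [mem_coe, mem_filter] at hg ⊢
    exact ⟨mem_univ _, fun h => ((hflip g).mp h) hg.2⟩
  · intro g hg
    rw [mem_coe, mem_filter] at hg ⊢
    exact ⟨mem_univ _, (hflip g).mpr hg.2⟩
  · intro g _; exact hinv g
  · intro g _; exact hinv g

/-- equality of the population size estimator under the `K'`-list marginal
no-highest-order-interaction assumption using all `K` lists with the estimator under the
no-highest-order-interaction assumption using only the first `K'` lists:
`n·[1 + Π̃_{odd,+}/Π̃_{even,+} - π̃_{0+}] = n†·[1 + Π̃†_odd/Π̃†_even]`. -/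
theorem stmt8 (K K' : ℕ) (hK : 3 ≤ K) (hK'1 : 1 < K') (hK'K : K' < K)
    (n : (Fin K → Bool) → ℝ) (hn : ∀ h ∈ Hstar K, 0 ≤ n h)
    (ntot : ℝ) (hntot : ntot = ∑ h ∈ Hstar K, n h) (hpos : 0 < ntot)
    (tπ : (Fin K → Bool) → ℝ) (htπ : ∀ h, tπ h = n h / ntot)
    (m : (Fin K' → Bool) → ℝ)
    (hm : ∀ g, m g = ∑ h ∈ Hstar K,
        if (fun i : Fin K' => h (Fin.castLE hK'K.le i)) = g then tπ h else 0)
    (hmpos : ∀ g ∈ Hstar K', 0 < m g)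
    (hm0 : m (fun _ => false) < 1)
    (ndag : ℝ) (hndag : ndag = ntot * (1 - m (fun _ => false)))
    (tdag : (Fin K' → Bool) → ℝ)
    (htdag : ∀ g, tdag g = m g / (1 - m (fun _ => false))) :
    ntot * (1 + pOdd (Hstar K') m / pEven (Hstar K') m - m (fun _ => false)) =
      ndag * (1 + pOdd (Hstar K') tdag / pEven (Hstar K') tdag) := by
  set m0 : ℝ := m (fun _ => false) with hm0def
  set c : ℝ := 1 - m0 with hcdef
  have hc : 0 < c := by show (0:ℝ) < 1 - m0; linarith
  have hcne : c ≠ 0 := ne_of_gt hc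
  -- cardinalities
  set A : ℕ := ((Hstar K').filter (fun g => Odd (∑ k, (g k).toNat))).card with hA
  set B : ℕ := ((Hstar K').filter (fun g => Even (∑ k, (g k).toNat))).card with hB
  have hK'pos : 0 < K' := Nat.lt_of_lt_of_le Nat.zero_lt_one hK'1.le
  have hzero_even : Even (∑ k, (((fun _ => false) : Fin K' → Bool) k).toNat) := by
    simp
  have hAB : A = B + 1 := by
    have h1 : (Hstar K').filter (fun g => Odd (∑ k, (g k).toNat)) =
        (univ : Finset (Fin K' → Bool)).filter (fun g => Odd (∑ k, (g k).toNat)) := by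
      ext g
      simp only [Hstar, mem_filter, mem_univ, true_and, Finset.filter_filter]
      constructor
      · rintro ⟨-, h⟩; exact h
      · intro h
        refine ⟨?_, h⟩
        rintro rfl
        exact (Nat.not_odd_iff_even.symm.mp hzero_even) h
    have h2 : (univ : Finset (Fin K' → Bool)).filter (fun g => ¬ Odd (∑ k, (g k).toNat)) =
        insert (fun _ => false) ((Hstar K').filter (fun g => Even (∑ k, (g k).toNat))) := by
      ext g
      simp only [Hstar, mem_filter, mem_univ, true_and, Finset.filter_filter, mem_insert]
      constructor
      · intro h
        by_cases hg : g = (fun _ => false)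
        · exact Or.inl hg
        · exact Or.inr ⟨hg, Nat.not_odd_iff_even.symm.mpr h⟩
      · rintro (rfl | ⟨-, h⟩)
        · exact Nat.not_odd_iff_even.symm.mp hzero_even
        · exact Nat.not_odd_iff_even.symm.mp h
    have hnotmem : (fun _ => false) ∉ (Hstar K').filter
        (fun g : Fin K' → Bool => Even (∑ k, (g k).toNat)) := by
      simp [Hstar]
    have := parity_card K' hK'pos
    rw [← h1, h2, Finset.card_insert_of_notMem hnotmem] at this
    simpa [hA, hB] using this
  -- positivity of the even product
  have hEpos : 0 < pEven (Hstar K') m := by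
    apply Finset.prod_pos
    intro g hg
    split
    · exact hmpos g hg
    · exact one_pos
  have hEne : pEven (Hstar K') m ≠ 0 := ne_of_gt hEpos
  -- rescaling of the products
  have hOd : pOdd (Hstar K') tdag = pOdd (Hstar K') m * c⁻¹ ^ A := by
    have step : pOdd (Hstar K') tdag = ∏ g ∈ Hstar K',
        ((if Odd (∑ k, (g k).toNat) then m g else 1) *
          (if Odd (∑ k, (g k).toNat) then c⁻¹ else 1)) := by
      unfold pOdd
      refine Finset.prod_congr rfl fun g _ => ?_
      rw [htdag g]
      by_cases h : Odd (∑ k, (g k).toNat) <;> simp [h, div_eq_mul_inv]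
    have hpow : (∏ g ∈ Hstar K', if Odd (∑ k, (g k).toNat) then c⁻¹ else 1)
        = c⁻¹ ^ A := by
      rw [Finset.prod_ite, Finset.prod_const, Finset.prod_const_one, mul_one, hA]
    rw [step, Finset.prod_mul_distrib, hpow]
    rfl
  have hEv : pEven (Hstar K') tdag = pEven (Hstar K') m * c⁻¹ ^ B := by
    have step : pEven (Hstar K') tdag = ∏ g ∈ Hstar K',
        ((if Even (∑ k, (g k).toNat) then m g else 1) *
          (if Even (∑ k, (g k).toNat) then c⁻¹ else 1)) := by
      unfold pEven
      refine Finset.prod_congr rfl fun g _ => ?_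
      rw [htdag g]
      by_cases h : Even (∑ k, (g k).toNat) <;> simp [h, div_eq_mul_inv]
    have hpow : (∏ g ∈ Hstar K', if Even (∑ k, (g k).toNat) then c⁻¹ else 1)
        = c⁻¹ ^ B := by
      rw [Finset.prod_ite, Finset.prod_const, Finset.prod_const_one, mul_one, hB]
    rw [step, Finset.prod_mul_distrib, hpow]
    rfl
  -- the final computation
  rw [hndag, hOd, hEv, hAB, pow_succ]
  have hcinvBne : (c : ℝ)⁻¹ ^ B ≠ 0 := pow_ne_zero _ (inv_ne_zero hcne)
  field_simp
  ring
end

section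
/- Let π = (π_h)_{h ∈ H} be positive reals summing to 1, with π_0 the value at h = (0,...,0), and let π̃_h = π_h/(1-π_0) for h ∈ H*. For any ξ > 0, the equality ∏_{h ∈ H} π_h^{I_odd(h)} / ∏_{h ∈ H} π_h^{I_even(h)} = ξ holds if and only if π_0 = (Π̃_odd/Π̃_even)/(ξ + Π̃_odd/Π̃_even), where Π̃_odd = ∏_{h ∈ H*} π̃_h^{I_odd(h)} and Π̃_even = ∏_{h ∈ H*} π̃_h^{I_even(h)}. -/
open Finset

lemma pOdd_eq_filter {K : ℕ} (s : Finset (Fin K → Bool)) (p : (Fin K → Bool) → ℝ) :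
    pOdd s p = ∏ h ∈ s.filter (fun h => Odd (∑ k, (h k).toNat)), p h := by
  rw [pOdd, Finset.prod_filter]

lemma pEven_eq_filter {K : ℕ} (s : Finset (Fin K → Bool)) (p : (Fin K → Bool) → ℝ) :
    pEven s p = ∏ h ∈ s.filter (fun h => Even (∑ k, (h k).toNat)), p h := by
  rw [pEven, Finset.prod_filter]

lemma flip_parity {K : ℕ} (i : Fin K) (h : Fin K → Bool) :
    Odd (∑ k, ((Function.update h i (!(h i))) k).toNat) ↔
      Even (∑ k, (h k).toNat) := by
  rw [Finset.sum_eq_sum_sdiff_singleton_add (Finset.mem_univ i)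
      (fun k => ((Function.update h i (!(h i))) k).toNat),
    Finset.sum_eq_sum_sdiff_singleton_add (Finset.mem_univ i) (fun k => (h k).toNat)]
  have hsum : ∑ k ∈ Finset.univ \ {i}, ((Function.update h i (!(h i))) k).toNat
      = ∑ k ∈ Finset.univ \ {i}, (h k).toNat := by
    refine Finset.sum_congr rfl fun k hk => ?_
    rw [Finset.mem_sdiff, Finset.mem_singleton] at hk
    rw [Function.update_of_ne hk.2]
  rw [hsum, Function.update_self]
  cases h i <;> simp [Nat.odd_iff, Nat.even_iff, Nat.add_mod] <;> omega

lemma card_odd_eq_card_even (K : ℕ) (hK : 1 ≤ K) :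
    (Finset.univ.filter (fun h : Fin K → Bool => Odd (∑ k, (h k).toNat))).card =
    (Finset.univ.filter (fun h : Fin K → Bool => Even (∑ k, (h k).toNat))).card := by
  set i : Fin K := ⟨0, hK⟩
  have flipflip : ∀ h : Fin K → Bool,
      Function.update (Function.update h i (!(h i))) i
        (!(Function.update h i (!(h i))) i) = h := by
    intro h; simp [Function.update_idem]
  refine Finset.card_nbij' (fun h => Function.update h i (!(h i)))
    (fun h => Function.update h i (!(h i))) ?_ ?_ ?_ ?_
  · intro h hh
    simp only [Finset.mem_coe, Finset.mem_filter, Finset.mem_univ, true_and] at hh ⊢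
    rw [← Nat.not_odd_iff_even, flip_parity, ← Nat.not_odd_iff_even, not_not]
    exact hh
  · intro h hh
    simp only [Finset.mem_coe, Finset.mem_filter, Finset.mem_univ, true_and] at hh ⊢
    exact (flip_parity i h).mpr hh
  · intro h _; exact flipflip h
  · intro h _; exact flipflip h

/-- for positive cell probabilities `π` summing to one, with observed cell
probabilities `π̃_h = π_h/(1-π_0)`, and any `ξ > 0`:
`Π_odd/Π_even = ξ ↔ π_0 = (Π̃_odd/Π̃_even)/(ξ + Π̃_odd/Π̃_even)`. -/
theorem stmt10 (K : ℕ) (hK : 1 ≤ K)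
    (π : (Fin K → Bool) → ℝ) (hπ : ∀ h, 0 < π h) (hs : ∑ h, π h = 1)
    (tπ : (Fin K → Bool) → ℝ)
    (htπ : ∀ h, tπ h = π h / (1 - π (fun _ => false)))
    (ξ : ℝ) (hξ : 0 < ξ) :
    pOdd Finset.univ π / pEven Finset.univ π = ξ ↔
      π (fun _ => false) =
        (pOdd (Hstar K) tπ / pEven (Hstar K) tπ) /
          (ξ + pOdd (Hstar K) tπ / pEven (Hstar K) tπ) := by
  classical
  set z : Fin K → Bool := (fun _ => false) with hz
  set π0 := π z with hπ0def
  have hπ0 : 0 < π0 := hπ z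
  have hone : (fun _ => true : Fin K → Bool) ≠ z := by
    intro hcon
    have := congrFun hcon ⟨0, hK⟩
    simp [hz] at this
  have hπ0lt : π0 < 1 := by
    calc π0 < ∑ h, π h := Finset.single_lt_sum hone (Finset.mem_univ z)
            (Finset.mem_univ _) (hπ _) (fun _ _ _ => (hπ _).le)
    _ = 1 := hs
  set c := 1 - π0 with hcdef
  have hc : 0 < c := by rw [hcdef]; linarith
  have hzsum : (∑ k, ((z : Fin K → Bool) k).toNat) = 0 := by simp [hz]
  set Oset := (Finset.univ.filter (fun h : Fin K → Bool => Odd (∑ k, (h k).toNat))) with hOset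
  set Eset := (Finset.univ.filter (fun h : Fin K → Bool => Even (∑ k, (h k).toNat))) with hEset
  have hzE : z ∈ Eset := by simp [hEset, hzsum]
  have hOstar : (Hstar K).filter (fun h => Odd (∑ k, (h k).toNat)) = Oset := by
    ext h
    simp only [Hstar, Finset.filter_filter, Finset.mem_filter, Finset.mem_univ, true_and, hOset]
    constructor
    · rintro ⟨_, h2⟩; exact h2
    · intro h2
      refine ⟨?_, h2⟩
      intro hcon
      rw [hcon] at h2
      simp [← hz, hzsum, Nat.odd_iff] at h2
  have hEstar : (Hstar K).filter (fun h => Even (∑ k, (h k).toNat)) = Eset.erase z := by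
    ext h
    simp only [Hstar, Finset.filter_filter, Finset.mem_filter, Finset.mem_univ, true_and,
      hEset, Finset.mem_erase, hz]
  set A := pOdd (Hstar K) π with hAdef
  set B := pEven (Hstar K) π with hBdef
  have hA : 0 < A := by
    rw [hAdef, pOdd]
    refine Finset.prod_pos fun h _ => ?_
    split
    · exact hπ h
    · norm_num
  have hB : 0 < B := by
    rw [hBdef, pEven]
    refine Finset.prod_pos fun h _ => ?_
    split
    · exact hπ h
    · norm_num
  set a := Oset.card with ha
  set b := (Eset.erase z).card with hb
  have hab : a = b + 1 := by
    have hOE : Oset.card = Eset.card := card_odd_eq_card_even K hK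
    have h1 : 1 ≤ Eset.card := Finset.card_pos.mpr ⟨z, hzE⟩
    rw [ha, hb, Finset.card_erase_of_mem hzE]
    omega
  have hOu : pOdd Finset.univ π = A := by
    rw [hAdef, pOdd_eq_filter, pOdd_eq_filter, hOstar]
  have hEu : pEven Finset.univ π = π0 * B := by
    rw [hBdef, pEven_eq_filter, pEven_eq_filter, hEstar, ← hEset,
      ← Finset.prod_erase_mul Eset π hzE, mul_comm]
  have hOt : pOdd (Hstar K) tπ = A / c ^ a := by
    rw [hAdef, pOdd_eq_filter, pOdd_eq_filter, hOstar,
      Finset.prod_congr rfl (fun h _ => htπ h),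
      Finset.prod_div_distrib, Finset.prod_const, ha]
  have hEt : pEven (Hstar K) tπ = B / c ^ b := by
    rw [hBdef, pEven_eq_filter, pEven_eq_filter, hEstar,
      Finset.prod_congr rfl (fun h _ => htπ h),
      Finset.prod_div_distrib, Finset.prod_const, hb]
  rw [hOu, hEu, hOt, hEt]
  have hcne : c ≠ 0 := ne_of_gt hc
  have hBne : B ≠ 0 := ne_of_gt hB
  have hRval : A / c ^ a / (B / c ^ b) = A / B / c := by
    rw [hab, pow_succ]
    field_simp
  rw [hRval]
  clear_value A B a b
  clear_value c
  clear_value π0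
  have hR : 0 < A / B / c := by positivity
  have hden : 0 < ξ + A / B / c := by positivity
  have hπ0ne : π0 ≠ 0 := ne_of_gt hπ0
  have hdenne : ξ + A / B / c ≠ 0 := ne_of_gt hden
  constructor
  · intro hh
    have hAeq : A = ξ * (π0 * B) := by
      rw [div_eq_iff (by positivity : π0 * B ≠ 0)] at hh
      linarith
    have hkey : A / B / c = ξ * π0 / c := by
      rw [hAeq]
      field_simp
    rw [hkey]
    have hcp : ξ + ξ * π0 / c = ξ / c := by
      rw [eq_div_iff hcne, add_mul, div_mul_cancel₀ _ hcne, hcdef]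
      ring
    rw [hcp]
    have : ξ * π0 / c / (ξ / c) = π0 := by
      rw [div_div_div_eq, div_eq_iff (by positivity : c * ξ ≠ 0)]
      ring
    exact this.symm
  · intro hh
    rw [eq_div_iff hdenne] at hh
    have h2 : A / B / c * (1 - π0) = π0 * ξ := by linear_combination -hh
    rw [← hcdef] at h2
    have h3 : A / B = π0 * ξ := by
      rw [div_mul_cancel₀ _ hcne] at h2
      exact h2
    have h4 : A = π0 * ξ * B := (div_eq_iff hBne).mp h3
    rw [div_eq_iff (by positivity : π0 * B ≠ 0), h4]
    ring
end

section
/- Let λ = (λ_{h'})_{h' ∈ H*} be real log-linear parameters, define μ_h = exp(∑_{h' ∈ H*} λ_{h'} ∏_{k=1}^K h_k^{h'_k}) for h ∈ H (so μ at h = (0,...,0) equals 1), and define cell probabilities π_h = μ_h / ∑_{h'' ∈ H} μ_{h''}. Then ∏_{h ∈ H} π_h^{I_odd(h)} / ∏_{h ∈ H} π_h^{I_even(h)} = exp((-1)^{K+1} λ_1), where λ_1 is the highest-order interaction parameter λ_{(1,...,1)}. -/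
open Finset

lemma signT (K : ℕ) (h' : Fin K → Bool) :
    ∑ h : Fin K → Bool, (if Odd (∑ k, (h k).toNat) then (1:ℝ) else -1) *
        ∏ k, (if h k then (1:ℝ) else 0) ^ (h' k).toNat
      = if h' = (fun _ => true) then (-1:ℝ)^(K+1) else 0 := by
  have key : ∀ h : Fin K → Bool,
      (if Odd (∑ k, (h k).toNat) then (1:ℝ) else -1) *
        ∏ k, (if h k then (1:ℝ) else 0) ^ (h' k).toNat
      = -(∏ k, ((-1:ℝ)^((h k).toNat) * (if h k then (1:ℝ) else 0) ^ (h' k).toNat)) := by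
    intro h
    rw [Finset.prod_mul_distrib, Finset.prod_pow_eq_pow_sum]
    have : ((-1:ℝ))^(∑ k, (h k).toNat) = if Odd (∑ k, (h k).toNat) then -1 else 1 := by
      rcases Nat.even_or_odd (∑ k, (h k).toNat) with he | ho
      · simp [he.neg_one_pow, Nat.not_odd_iff_even.mpr he]
      · simp [ho.neg_one_pow, ho]
    rw [this]
    split <;> ring
  rw [Finset.sum_congr rfl (fun h _ => key h), Finset.sum_neg_distrib]
  have hps := Finset.prod_univ_sum (fun _ : Fin K => (Finset.univ : Finset Bool))
    (fun k b => ((-1:ℝ)^(b.toNat) * (if b then (1:ℝ) else 0) ^ (h' k).toNat))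
  rw [Fintype.piFinset_univ] at hps
  rw [← hps]
  have factor : ∀ k : Fin K,
      (∑ b : Bool, ((-1:ℝ)^(b.toNat) * (if b then (1:ℝ) else 0) ^ (h' k).toNat))
        = if h' k then (-1:ℝ) else 0 := by
    intro k
    rw [Fintype.sum_bool]
    cases hk : h' k <;> simp
  rw [Finset.prod_congr rfl (fun k _ => factor k)]
  by_cases hall : h' = fun _ => true
  · subst hall
    simp [pow_succ]
  · have : ∃ k, h' k = false := by
      by_contra hc
      push_neg at hc
      exact hall (funext fun k => by simpa using hc k)
    obtain ⟨k, hk⟩ := this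
    rw [if_neg hall]
    rw [Finset.prod_eq_zero (Finset.mem_univ k) (by simp [hk])]
    ring

/-- for log-linear parameters `λ = (λ_{h'})_{h' ∈ H*}`, with
`μ_h = exp(∑_{h' ∈ H*} λ_{h'} ∏_k h_k^{h'_k})` and `π_h = μ_h / ∑_{h''} μ_{h''}`, one has
`Π_odd/Π_even = exp((-1)^{K+1} λ_{(1,...,1)})`. -/
theorem stmt14 (K : ℕ) (hK : 1 ≤ K)
    (lam μ π : (Fin K → Bool) → ℝ)
    (hμ : ∀ h, μ h = Real.exp (∑ h' ∈ Hstar K,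
        lam h' * ∏ k, (if h k then (1 : ℝ) else 0) ^ (h' k).toNat))
    (hπ : ∀ h, π h = μ h / ∑ h'' : Fin K → Bool, μ h'') :
    pOdd Finset.univ π / pEven Finset.univ π =
      Real.exp ((-1 : ℝ) ^ (K + 1) * lam (fun _ => true)) := by
  set f : (Fin K → Bool) → ℝ := fun h => ∑ h' ∈ Hstar K,
      lam h' * ∏ k, (if h k then (1 : ℝ) else 0) ^ (h' k).toNat with hf
  set S : ℝ := ∑ h'' : Fin K → Bool, μ h'' with hS
  have hSpos : 0 < S := by
    apply Finset.sum_pos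
    · intro h _
      rw [hμ h]; exact Real.exp_pos _
    · exact Finset.univ_nonempty
  have hπ' : ∀ h, π h = Real.exp (f h - Real.log S) := by
    intro h
    rw [hπ h, hμ h, Real.exp_sub, Real.exp_log hSpos]
  set g : (Fin K → Bool) → ℝ := fun h => f h - Real.log S with hg
  have hodd : pOdd Finset.univ π
      = Real.exp (∑ h : Fin K → Bool, if Odd (∑ k, (h k).toNat) then g h else 0) := by
    rw [pOdd, Real.exp_sum]
    refine Finset.prod_congr rfl fun h _ => ?_
    rw [hπ' h]
    split <;> simp [hg]
  have heven : pEven Finset.univ π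
      = Real.exp (∑ h : Fin K → Bool, if Even (∑ k, (h k).toNat) then g h else 0) := by
    rw [pEven, Real.exp_sum]
    refine Finset.prod_congr rfl fun h _ => ?_
    rw [hπ' h]
    split <;> simp [hg]
  rw [hodd, heven, ← Real.exp_sub, ← Finset.sum_sub_distrib]
  congr 1
  have step1 : ∀ h : Fin K → Bool,
      ((if Odd (∑ k, (h k).toNat) then g h else 0) - (if Even (∑ k, (h k).toNat) then g h else 0))
      = (if Odd (∑ k, (h k).toNat) then (1:ℝ) else -1) * g h := by
    intro h
    rcases Nat.even_or_odd (∑ k, (h k).toNat) with he | ho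
    · simp [he, Nat.not_odd_iff_even.mpr he]
    · simp [ho, Nat.not_even_iff_odd.mpr ho]
  rw [Finset.sum_congr rfl (fun h _ => step1 h)]
  have expand : ∀ h : Fin K → Bool,
      (if Odd (∑ k, (h k).toNat) then (1:ℝ) else -1) * g h
      = (if Odd (∑ k, (h k).toNat) then (1:ℝ) else -1) * f h
        - (if Odd (∑ k, (h k).toNat) then (1:ℝ) else -1) * Real.log S := by
    intro h; rw [hg]; ring
  rw [Finset.sum_congr rfl (fun h _ => expand h), Finset.sum_sub_distrib]
  have hzero : (∑ h : Fin K → Bool,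
      (if Odd (∑ k, (h k).toNat) then (1:ℝ) else -1) * Real.log S) = 0 := by
    rw [← Finset.sum_mul]
    have := signT K (fun _ => false)
    simp only [Bool.toNat_false, pow_zero, Finset.prod_const_one, mul_one] at this
    rw [this]
    have hne : (fun _ : Fin K => false) ≠ (fun _ => true) := by
      intro hcon
      have := congrFun hcon ⟨0, hK⟩
      simp at this
    rw [if_neg hne, zero_mul]
  rw [hzero, sub_zero]
  have hswap : (∑ h : Fin K → Bool,
      (if Odd (∑ k, (h k).toNat) then (1:ℝ) else -1) * f h)
      = ∑ h' ∈ Hstar K, lam h' *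
          ∑ h : Fin K → Bool, (if Odd (∑ k, (h k).toNat) then (1:ℝ) else -1) *
            ∏ k, (if h k then (1 : ℝ) else 0) ^ (h' k).toNat := by
    simp only [hf, Finset.mul_sum]
    rw [Finset.sum_comm]
    exact Finset.sum_congr rfl fun h' _ => Finset.sum_congr rfl fun h _ => by ring
  rw [hswap]
  have hterm : ∀ h' ∈ Hstar K, lam h' *
      (∑ h : Fin K → Bool, (if Odd (∑ k, (h k).toNat) then (1:ℝ) else -1) *
        ∏ k, (if h k then (1 : ℝ) else 0) ^ (h' k).toNat)
      = if h' = (fun _ => true) then (-1:ℝ)^(K+1) * lam h' else 0 := by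
    intro h' _
    rw [signT K h']
    split <;> ring
  rw [Finset.sum_congr rfl hterm]
  rw [Finset.sum_ite_eq' (Hstar K) (fun _ => true) (fun h' => (-1:ℝ)^(K+1) * lam h')]
  rw [if_pos]
  rw [Hstar, Finset.mem_filter]
  refine ⟨Finset.mem_univ _, ?_⟩
  intro hcon
  have := congrFun hcon ⟨0, hK⟩
  simp at this
end
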